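/- arXiv:1310.7053 — 12 statements merged into one kernel-verified Lean document; each statement's English description precedes it below -/
import Mathlib

section
/- A function f : ℕ^r → ℂ is firmly multiplicative (i.e., f is not identically zero and f(m₁n₁,...,mᵣnᵣ) = f(m₁,...,mᵣ)·f(n₁,...,nᵣ) whenever gcd(mᵢ,nᵢ)=1 for each i) if and only if there exist multiplicative functions f₁,...,fᵣ : ℕ → ℂ (each of one variable) such that f(n₁,...,nᵣ) = f₁(n₁)···fᵣ(nᵣ) for all positive integers n₁,...,nᵣ; in that case fᵢ(n) = f(1,...,1,n,1,...,1) with n in the i-th position. -/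
open Finset

/-- A one-variable function is multiplicative: not identically zero (on positive
integers) and `g (m*n) = g m * g n` whenever `gcd m n = 1`. -/
def IsMultiplicative1 (g : ℕ → ℂ) : Prop :=
  (∃ n : ℕ, 0 < n ∧ g n ≠ 0) ∧
    ∀ m n : ℕ, 0 < m → 0 < n → Nat.Coprime m n → g (m * n) = g m * g n

/-- `f : ℕ^r → ℂ` is firmly multiplicative. -/
def IsFirmlyMultiplicative {r : ℕ} (f : (Fin r → ℕ) → ℂ) : Prop :=
  (∃ n : Fin r → ℕ, (∀ i, 0 < n i) ∧ f n ≠ 0) ∧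
    ∀ m n : Fin r → ℕ, (∀ i, 0 < m i) → (∀ i, 0 < n i) →
      (∀ i, Nat.Coprime (m i) (n i)) →
      f (fun i => m i * n i) = f m * f n

theorem firmly_multiplicative_iff_prod_of_multiplicative {r : ℕ}
    (f : (Fin r → ℕ) → ℂ) :
    IsFirmlyMultiplicative f ↔
      ∃ g : Fin r → ℕ → ℂ, (∀ i, IsMultiplicative1 (g i)) ∧
        (∀ n : Fin r → ℕ, (∀ i, 0 < n i) → f n = ∏ i, g i (n i)) ∧
        (∀ i : Fin r, ∀ n : ℕ, 0 < n →
          g i n = f (fun j => if j = i then n else 1)) := by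
  constructor
  · rintro ⟨⟨n₀, hn₀pos, hn₀⟩, hmul⟩
    have h1 : f (fun _ => 1) = 1 := by
      have h := hmul n₀ (fun _ => 1) hn₀pos (fun _ => one_pos)
        (fun i => Nat.coprime_one_right _)
      simp only [mul_one] at h
      have h2 : f n₀ * 1 = f n₀ * f fun _ => 1 := by rw [mul_one]; exact h
      exact (mul_left_cancel₀ hn₀ h2).symm
    set g : Fin r → ℕ → ℂ := fun i n => f (fun j => if j = i then n else 1) with hg
    have hgmul : ∀ i : Fin r, ∀ m n : ℕ, 0 < m → 0 < n → Nat.Coprime m n →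
        g i (m * n) = g i m * g i n := by
      intro i m n hm hn hc
      have h := hmul (fun j => if j = i then m else 1) (fun j => if j = i then n else 1)
        (fun j => by by_cases hj : j = i <;> simp [hj, hm])
        (fun j => by by_cases hj : j = i <;> simp [hj, hn])
        (fun j => by by_cases hj : j = i <;> simp only [hj, if_pos, if_neg, ite_true, ite_false] <;> [exact hc; exact Nat.coprime_one_right 1])
      simp only [hg]
      rw [← h]
      congr 1
      funext j
      by_cases hj : j = i <;> simp [hj]
    have hprod : ∀ s : Finset (Fin r), ∀ n : Fin r → ℕ, (∀ i, 0 < n i) →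
        f (fun i => if i ∈ s then n i else 1) = ∏ i ∈ s, g i (n i) := by
      intro s
      induction s using Finset.induction_on with
      | empty => intro n hn; simpa using h1
      | @insert a s ha ih =>
        intro n hn
        have h := hmul (fun j => if j = a then n a else 1)
          (fun j => if j ∈ s then n j else 1)
          (fun j => by by_cases hj : j = a <;> simp [hj, hn a])
          (fun j => by by_cases hj : j ∈ s <;> simp [hj, hn j])
          (fun j => by
            by_cases hj : j = a
            · subst hj; simp [ha, Nat.coprime_one_right]
            · simp [hj, Nat.coprime_one_left])
        have harg : (fun i => (if i = a then n a else 1) * (if i ∈ s then n i else 1))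
            = fun i => if i ∈ insert a s then n i else 1 := by
          funext j
          by_cases hj : j = a
          · subst hj; simp [ha]
          · by_cases hjs : j ∈ s <;> simp [hj, hjs]
        rw [harg] at h
        rw [h, ih n hn, Finset.prod_insert ha]
    refine ⟨g, fun i => ⟨⟨1, one_pos, ?_⟩, hgmul i⟩, ?_, fun i n _ => rfl⟩
    · simp only [hg, ite_self]
      rw [h1]; exact one_ne_zero
    · intro n hn
      have := hprod Finset.univ n hn
      simpa using this
  · rintro ⟨g, hg, hprod, -⟩
    constructor
    · choose n hnpos hn using fun i => (hg i).1
      refine ⟨n, hnpos, ?_⟩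
      rw [hprod n hnpos]
      exact Finset.prod_ne_zero_iff.mpr fun i _ => hn i
    · intro m n hm hn hc
      rw [hprod _ (fun i => Nat.mul_pos (hm i) (hn i)), hprod _ hm, hprod _ hn,
        ← Finset.prod_mul_distrib]
      exact Finset.prod_congr rfl fun i _ => (hg i).2 _ _ (hm i) (hn i) (hc i)
end

section
/- For every r ≥ 2 and all positive integers n₁,...,nᵣ: ∑_{d₁∣n₁,...,dᵣ∣nᵣ} ϱ(d₁,...,dᵣ) = τ(n₁···nᵣ), where ϱ(d₁,...,dᵣ) = 1 if d₁,...,dᵣ are pairwise relatively prime and 0 otherwise, and τ is the number-of-divisors function. -/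
open Finset

/-- number of divisors of `X` coprime to `m`, as a sum of indicators -/
def sdc (m X : ℕ) : ℕ := ∑ D ∈ X.divisors, (if Nat.Coprime D m then 1 else 0)

lemma sdc_eq_card (m X : ℕ) :
    sdc m X = #(X.divisors.filter (fun D => Nat.Coprime D m)) :=
  (Finset.card_filter _ _).symm

lemma sum_divisors_coprime_mul {β : Type*} [AddCommMonoid β] {M N : ℕ}
    (h : Nat.Coprime M N) (hM : M ≠ 0) (hN : N ≠ 0) (f : ℕ → β) :
    ∑ d ∈ (M * N).divisors, f d = ∑ a ∈ M.divisors, ∑ b ∈ N.divisors, f (a * b) := by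
  rw [← Finset.sum_product']
  refine Finset.sum_nbij' (i := fun d => (Nat.gcd d M, Nat.gcd d N))
    (j := fun p => p.1 * p.2) ?_ ?_ ?_ ?_ ?_
  · intro d hd
    rw [Nat.mem_divisors] at hd
    simp only [Finset.mem_product, Nat.mem_divisors]
    exact ⟨⟨Nat.gcd_dvd_right _ _, hM⟩, ⟨Nat.gcd_dvd_right _ _, hN⟩⟩
  · rintro ⟨a, b⟩ hab
    simp only [Finset.mem_product, Nat.mem_divisors] at hab
    exact Nat.mem_divisors.mpr ⟨mul_dvd_mul hab.1.1 hab.2.1, mul_ne_zero hM hN⟩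
  · intro d hd
    rw [Nat.mem_divisors] at hd
    exact (Nat.gcd_mul_gcd_eq_iff_dvd_mul_of_coprime h).mpr hd.1
  · rintro ⟨a, b⟩ hab
    simp only [Finset.mem_product, Nat.mem_divisors] at hab
    have hbM : Nat.Coprime b M := Nat.Coprime.coprime_dvd_left hab.2.1 h.symm
    have haN : Nat.Coprime a N := Nat.Coprime.coprime_dvd_left hab.1.1 h
    have h1 : Nat.gcd (a * b) M = a := by
      rw [Nat.Coprime.gcd_mul_right_cancel a hbM, Nat.gcd_eq_left hab.1.1]
    have h2 : Nat.gcd (a * b) N = b := by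
      rw [mul_comm, Nat.Coprime.gcd_mul_right_cancel b haN, Nat.gcd_eq_left hab.2.1]
    simp [h1, h2]
  · intro d hd
    rw [Nat.mem_divisors] at hd
    rw [(Nat.gcd_mul_gcd_eq_iff_dvd_mul_of_coprime h).mpr hd.1]

lemma sdc_mul {m X Y : ℕ} (hX : X ≠ 0) (hY : Y ≠ 0) (h : Nat.Coprime X Y) :
    sdc m (X * Y) = sdc m X * sdc m Y := by
  unfold sdc
  rw [sum_divisors_coprime_mul h hX hY, Finset.sum_mul_sum]
  refine Finset.sum_congr rfl fun a _ => Finset.sum_congr rfl fun b _ => ?_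
  simp only [Nat.coprime_mul_iff_left, ite_and]
  split_ifs <;> simp

lemma sdc_prime_pow_not_dvd {p m : ℕ} (pp : p.Prime) (hpm : ¬ p ∣ m) (k : ℕ) :
    sdc m (p ^ k) = k + 1 := by
  have hc : Nat.Coprime p m := (Nat.Prime.coprime_iff_not_dvd pp).mpr hpm
  unfold sdc
  rw [Nat.sum_divisors_prime_pow pp]
  have h : ∀ x : ℕ, Nat.Coprime (p ^ x) m := fun x => Nat.Coprime.pow_left x hc
  rw [Finset.sum_congr rfl fun x _ => if_pos (h x), Finset.sum_const, Finset.card_range,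
    smul_eq_mul, mul_one]

lemma sdc_prime_pow_dvd {p m : ℕ} (pp : p.Prime) (hpm : p ∣ m) (k : ℕ) :
    sdc m (p ^ k) = 1 := by
  unfold sdc
  rw [Nat.sum_divisors_prime_pow pp]
  rw [Finset.sum_eq_single 0]
  · simp
  · intro j _ hj
    have : ¬ Nat.Coprime (p ^ j) m := by
      rw [Nat.coprime_pow_left_iff (Nat.pos_of_ne_zero hj)]
      exact fun hc => (pp.coprime_iff_not_dvd.mp hc) hpm
    simp [this]
  · simp


lemma sdc_absorb_pow {m p M : ℕ} (hp : p.Prime) (hpM : ¬ p ∣ M) (j : ℕ) :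
    sdc (m * p ^ j) M = sdc m M := by
  unfold sdc
  refine Finset.sum_congr rfl fun D hD => ?_
  have hDdvd : D ∣ M := (Nat.mem_divisors.mp hD).1
  have hDp : Nat.Coprime D (p ^ j) :=
    Nat.Coprime.pow_right _ ((hp.coprime_iff_not_dvd.mpr fun hc => hpM (hc.trans hDdvd)).symm)
  exact if_congr (by rw [Nat.coprime_mul_iff_right]; exact and_iff_left hDp) rfl rfl

lemma sdc_pdvd {m p M k : ℕ} (hp : p.Prime) (hpm : p ∣ m) (hM : M ≠ 0) :
    sdc m (M * p ^ k) = sdc m M := by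
  rw [sdc_eq_card, sdc_eq_card]
  congr 1
  ext D
  simp only [Finset.mem_filter, Nat.mem_divisors]
  constructor
  · rintro ⟨⟨hDdvd, -⟩, hcop⟩
    have hDp : Nat.Coprime D (p ^ k) :=
      Nat.Coprime.pow_right _ (Nat.Coprime.coprime_dvd_right hpm hcop)
    exact ⟨⟨hDp.dvd_of_dvd_mul_right hDdvd, hM⟩, hcop⟩
  · rintro ⟨⟨hDdvd, -⟩, hcop⟩
    exact ⟨⟨hDdvd.trans (dvd_mul_right _ _), mul_ne_zero hM (pow_ne_zero _ hp.pos.ne')⟩, hcop⟩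

lemma L_pp {p : ℕ} (pp : p.Prime) (k : ℕ) {M : ℕ} (hM : M ≠ 0) (m : ℕ) :
    ∑ e ∈ (p ^ k).divisors, (if Nat.Coprime e m then sdc (m * e) M else 0)
      = sdc m (M * p ^ k) := by
  rw [Nat.sum_divisors_prime_pow pp]
  by_cases hpm : p ∣ m
  · rw [sdc_pdvd pp hpm hM, Finset.sum_eq_single 0]
    · simp
    · intro j _ hj0
      have hnc : ¬ Nat.Coprime (p ^ j) m := by
        rw [Nat.coprime_pow_left_iff (Nat.pos_of_ne_zero hj0)]
        exact fun hc => (pp.coprime_iff_not_dvd.mp hc) hpm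
      simp [hnc]
    · simp
  · have hcpm : Nat.Coprime p m := pp.coprime_iff_not_dvd.mpr hpm
    set a := M.factorization p with ha
    set M0 := ordCompl[p] M with hM0
    have hMeq : p ^ a * M0 = M := Nat.ordProj_mul_ordCompl_eq_self M p
    have hpM0 : ¬ p ∣ M0 := Nat.not_dvd_ordCompl pp hM
    have hM0ne : M0 ≠ 0 := (Nat.ordCompl_pos p hM).ne'
    have hcop0 : Nat.Coprime p M0 := pp.coprime_iff_not_dvd.mpr hpM0
    have hterm : ∀ j : ℕ, (if Nat.Coprime (p ^ j) m then sdc (m * p ^ j) M else 0)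
        = (if j = 0 then (a + 1) * sdc m M0 else sdc m M0) := by
      intro j
      have hcopj : Nat.Coprime (p ^ j) m := Nat.Coprime.pow_left _ hcpm
      rw [if_pos hcopj, ← hMeq,
        sdc_mul (pow_ne_zero _ pp.pos.ne') hM0ne (Nat.Coprime.pow_left _ hcop0)]
      rcases Nat.eq_zero_or_pos j with h0 | hjpos
      · subst h0
        rw [if_pos rfl]
        simp only [pow_zero, mul_one]
        rw [sdc_prime_pow_not_dvd pp hpm]
      · rw [if_neg hjpos.ne',
          sdc_prime_pow_dvd pp (dvd_mul_of_dvd_right (dvd_pow_self p hjpos.ne') m),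
          sdc_absorb_pow pp hpM0, one_mul]
    rw [Finset.sum_congr rfl fun j _ => hterm j, Finset.sum_range_succ']
    have hRHS : M * p ^ k = p ^ (a + k) * M0 := by rw [← hMeq]; ring
    rw [hRHS, sdc_mul (pow_ne_zero _ pp.pos.ne') hM0ne (Nat.Coprime.pow_left _ hcop0),
      sdc_prime_pow_not_dvd pp hpm]
    simp only [Nat.succ_ne_zero, if_neg, if_pos, Nat.add_eq, reduceIte]
    rw [Finset.sum_const, Finset.card_range, smul_eq_mul]
    ring

lemma L_main : ∀ n : ℕ, n ≠ 0 → ∀ m M : ℕ, M ≠ 0 →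
    ∑ e ∈ n.divisors, (if Nat.Coprime e m then sdc (m * e) M else 0) = sdc m (M * n) := by
  intro n
  induction n using Nat.strong_induction_on with
  | _ n IH =>
    intro hn m M hM
    rcases eq_or_ne n 1 with rfl | hn1
    · simp [Nat.divisors_one, Nat.coprime_one_left]
    · set p := n.minFac with hp
      have pp : p.Prime := Nat.minFac_prime hn1
      set k := n.factorization p with hk
      set q := ordCompl[p] n with hq
      have hkpos : 0 < k := Nat.Prime.factorization_pos_of_dvd pp hn (Nat.minFac_dvd n)
      have hneq : p ^ k * q = n := Nat.ordProj_mul_ordCompl_eq_self n p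
      have hpq : ¬ p ∣ q := Nat.not_dvd_ordCompl pp hn
      have hqne : q ≠ 0 := (Nat.ordCompl_pos p hn).ne'
      have hcop : Nat.Coprime (p ^ k) q :=
        Nat.Coprime.pow_left _ (pp.coprime_iff_not_dvd.mpr hpq)
      have h1 : 1 < p ^ k := Nat.one_lt_pow hkpos.ne' pp.one_lt
      have hqlt : q < n := by
        conv_rhs => rw [← hneq]
        exact lt_mul_of_one_lt_left (Nat.pos_of_ne_zero hqne) h1
      rw [← hneq, sum_divisors_coprime_mul hcop (pow_ne_zero _ pp.pos.ne') hqne]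
      have hstep : ∀ a ∈ (p ^ k).divisors,
          (∑ b ∈ q.divisors, (if Nat.Coprime (a * b) m then sdc (m * (a * b)) M else 0))
            = (if Nat.Coprime a m then sdc (m * a) (M * q) else 0) := by
        intro a hamem
        have hadvd : a ∣ p ^ k := (Nat.mem_divisors.mp hamem).1
        by_cases hac : Nat.Coprime a m
        · rw [if_pos hac, ← IH q hqlt hqne (m * a) M hM]
          refine Finset.sum_congr rfl fun b hb => ?_
          have hbdvd : b ∣ q := (Nat.mem_divisors.mp hb).1
          have hba : Nat.Coprime b a := Nat.Coprime.coprime_dvd_right hadvd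
            (Nat.Coprime.pow_right _
              ((pp.coprime_iff_not_dvd.mpr fun hc => hpq (hc.trans hbdvd)).symm))
          have hiff : Nat.Coprime (a * b) m ↔ Nat.Coprime b (m * a) := by
            rw [Nat.coprime_mul_iff_left, Nat.coprime_mul_iff_right]
            exact ⟨fun ⟨_, h2⟩ => ⟨h2, hba⟩, fun ⟨h2, _⟩ => ⟨hac, h2⟩⟩
          exact if_congr hiff (by rw [mul_assoc]) rfl
        · rw [if_neg hac]
          refine Finset.sum_eq_zero fun b _ => ?_
          have hnc : ¬ Nat.Coprime (a * b) m :=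
            fun hc => hac (Nat.coprime_mul_iff_left.mp hc).1
          simp [hnc]
      rw [Finset.sum_congr rfl hstep, L_pp pp k (mul_ne_zero hM hqne) m]
      congr 1
      ring

lemma pi_claim : ∀ (r : ℕ) (n : Fin r → ℕ), (∀ i, n i ≠ 0) → ∀ m : ℕ,
    ∑ d ∈ Fintype.piFinset (fun i => (n i).divisors),
      (if (∀ i j : Fin r, i ≠ j → Nat.Coprime (d i) (d j)) ∧ (∀ i, Nat.Coprime (d i) m)
        then 1 else 0)
      = sdc m (∏ i, n i) := by
  intro r
  induction r with
  | zero =>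
    intro n hn m
    have h1 : sdc m 1 = 1 := by simp [sdc, Nat.divisors_one, Nat.coprime_one_left, Finset.filter_singleton]
    simp [h1]
  | succ r IH =>
    intro n hn m
    have key : ∀ F : (Fin (r + 1) → ℕ) → ℕ,
        ∑ d ∈ Fintype.piFinset (fun i => (n i).divisors), F d
          = ∑ x ∈ (n 0).divisors ×ˢ
              Fintype.piFinset (fun i : Fin r => (n i.succ).divisors), F (Fin.cons x.1 x.2) := by
      intro F
      refine Finset.sum_nbij' (i := fun d => (d 0, Fin.tail d))
        (j := fun x => Fin.cons x.1 x.2) ?_ ?_ ?_ ?_ ?_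
      · intro d hd
        rw [Fintype.mem_piFinset] at hd
        simp only [Finset.mem_product, Fintype.mem_piFinset]
        exact ⟨hd 0, fun i => hd i.succ⟩
      · rintro ⟨e, d'⟩ hx
        simp only [Finset.mem_product, Fintype.mem_piFinset] at hx
        rw [Fintype.mem_piFinset]
        intro i
        refine Fin.cases ?_ ?_ i
        · simpa using hx.1
        · intro i'
          simpa using hx.2 i'
      · intro d _
        exact Fin.cons_self_tail d
      · rintro ⟨e, d'⟩ _
        simp
      · intro d _
        rw [Fin.cons_self_tail]
    rw [key, Finset.sum_product]
    have hinner : ∀ e ∈ (n 0).divisors,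
        (∑ d' ∈ Fintype.piFinset (fun i : Fin r => (n i.succ).divisors),
          (if (∀ i j : Fin (r + 1), i ≠ j →
                Nat.Coprime (Fin.cons (α := fun _ => ℕ) e d' i) (Fin.cons (α := fun _ => ℕ) e d' j)) ∧
              (∀ i, Nat.Coprime (Fin.cons (α := fun _ => ℕ) e d' i) m) then 1 else 0))
          = (if Nat.Coprime e m then sdc (m * e) (∏ i : Fin r, n i.succ) else 0) := by
      intro e _
      have hPQ : ∀ d' : Fin r → ℕ,
          ((∀ i j : Fin (r + 1), i ≠ j →
              Nat.Coprime (Fin.cons (α := fun _ => ℕ) e d' i) (Fin.cons (α := fun _ => ℕ) e d' j)) ∧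
            (∀ i, Nat.Coprime (Fin.cons (α := fun _ => ℕ) e d' i) m))
          ↔ (Nat.Coprime e m ∧
              ((∀ i j : Fin r, i ≠ j → Nat.Coprime (d' i) (d' j)) ∧
                (∀ i, Nat.Coprime (d' i) (m * e)))) := by
        intro d'
        constructor
        · rintro ⟨hpair, hall⟩
          refine ⟨by simpa using hall 0, fun i j hij => ?_, fun i => ?_⟩
          · have := hpair i.succ j.succ (fun h => hij (Fin.succ_injective _ h))
            simpa using this
          · rw [Nat.coprime_mul_iff_right]
            refine ⟨by simpa using hall i.succ, ?_⟩
            have := hpair i.succ 0 (Fin.succ_ne_zero i)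
            simpa using this
        · rintro ⟨hem, hpair', hall'⟩
          constructor
          · intro i j hij
            rcases Fin.eq_zero_or_eq_succ i with rfl | ⟨is, rfl⟩ <;>
              rcases Fin.eq_zero_or_eq_succ j with rfl | ⟨js, rfl⟩
            · exact absurd rfl hij
            · simp only [Fin.cons_zero, Fin.cons_succ]
              exact ((Nat.coprime_mul_iff_right.mp (hall' js)).2).symm
            · simp only [Fin.cons_zero, Fin.cons_succ]
              exact (Nat.coprime_mul_iff_right.mp (hall' is)).2
            · simp only [Fin.cons_succ]
              exact hpair' is js (fun h => hij (congrArg Fin.succ h))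
          · intro i
            refine Fin.cases ?_ ?_ i
            · simpa using hem
            · intro i'
              simpa using (Nat.coprime_mul_iff_right.mp (hall' i')).1
      rw [Finset.sum_congr rfl fun d' _ => if_congr (hPQ d') rfl rfl]
      by_cases hem : Nat.Coprime e m
      · rw [if_pos hem, ← IH (fun i => n i.succ) (fun i => hn i.succ) (m * e)]
        exact Finset.sum_congr rfl fun d' _ =>
          if_congr (and_iff_right hem) rfl rfl
      · rw [if_neg hem]
        exact Finset.sum_eq_zero fun d' _ => by
          simp only [hem, false_and, if_false]
    rw [Finset.sum_congr rfl hinner,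
      L_main (n 0) (hn 0) m (∏ i : Fin r, n i.succ)
        (Finset.prod_ne_zero_iff.mpr fun i _ => hn i.succ),
      Fin.prod_univ_succ, mul_comm]

theorem sum_pairwise_coprime_characteristic_eq_tau {r : ℕ} (hr : 2 ≤ r)
    (n : Fin r → ℕ) (hn : ∀ i, 0 < n i) :
    ∑ d ∈ Fintype.piFinset (fun i => (n i).divisors),
        (if ∀ i j : Fin r, i ≠ j → Nat.Coprime (d i) (d j) then 1 else 0)
      = (∏ i, n i).divisors.card := by
  have h := pi_claim r n (fun i => (hn i).ne') 1
  have hiff : ∀ d : Fin r → ℕ,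
      ((∀ i j : Fin r, i ≠ j → Nat.Coprime (d i) (d j)) ∧
        (∀ i, Nat.Coprime (d i) 1))
      ↔ (∀ i j : Fin r, i ≠ j → Nat.Coprime (d i) (d j)) :=
    fun d => and_iff_left fun i => Nat.coprime_one_right _
  rw [Finset.sum_congr rfl fun d _ => (if_congr (hiff d) rfl rfl).symm, h,
    sdc_eq_card, Finset.filter_true_of_mem fun x _ => Nat.coprime_one_right x]
end

section
/- For all positive integers n₁,...,nᵣ: ∑_{d₁∣n₁,...,dᵣ∣nᵣ} gcd(d₁,...,dᵣ) = ∑_{d ∣ gcd(n₁,...,nᵣ)} φ(d)·τ(n₁/d)···τ(nᵣ/d), where φ is Euler's totient function and τ is the number-of-divisors function. -/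
open Finset

lemma card_divisors_filter_dvd {e m : ℕ} (he : e ∣ m) (hm : 0 < m) :
    ((m).divisors.filter (fun d => e ∣ d)).card = (m / e).divisors.card := by
  have he0 : 0 < e := Nat.pos_of_dvd_of_pos he hm
  apply Finset.card_bij' (fun d _ => d / e) (fun d _ => e * d)
  · intro d hd
    simp only [Finset.mem_filter, Nat.mem_divisors] at hd
    rw [Nat.mem_divisors]
    have he' : e ∣ d := hd.2
    refine ⟨(Nat.dvd_div_iff_mul_dvd he).mpr ?_, Nat.div_ne_zero_iff.mpr ⟨he0.ne', Nat.le_of_dvd hm he⟩⟩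
    rw [Nat.mul_div_cancel' he']
    exact hd.1.1
  · intro d hd
    rw [Nat.mem_divisors] at hd
    simp only [Finset.mem_filter, Nat.mem_divisors]
    exact ⟨⟨(Nat.dvd_div_iff_mul_dvd he).mp hd.1, hm.ne'⟩, Dvd.intro d rfl⟩
  · intro d hd
    simp only [Finset.mem_filter] at hd
    exact Nat.mul_div_cancel' hd.2
  · intro d hd
    exact Nat.mul_div_cancel_left d he0

theorem sum_gcd_divisors_eq_sum_totient_tau {r : ℕ} (n : Fin r → ℕ)
    (hn : ∀ i, 0 < n i) :
    ∑ d ∈ Fintype.piFinset (fun i => (n i).divisors), Finset.univ.gcd d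
      = ∑ d ∈ (Finset.univ.gcd n).divisors,
          Nat.totient d * ∏ i, (n i / d).divisors.card := by
  have h1 : ∀ d ∈ Fintype.piFinset (fun i => (n i).divisors),
      Finset.univ.gcd d = ∑ e ∈ (Finset.univ.gcd n).divisors,
        if ∀ i, e ∣ d i then Nat.totient e else 0 := by
    intro d hd
    rw [Fintype.mem_piFinset] at hd
    have hdvd : ∀ i, d i ∣ n i := fun i => (Nat.mem_divisors.mp (hd i)).1
    have hd0 : ∀ i, 0 < d i := fun i =>
      Nat.pos_of_dvd_of_pos (hdvd i) (hn i)
    rw [← Nat.sum_totient (Finset.univ.gcd d), ← Finset.sum_filter]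
    congr 1
    ext e
    simp only [Finset.mem_filter, Nat.mem_divisors, Finset.dvd_gcd_iff,
      Finset.mem_univ, true_implies, Ne, Finset.gcd_eq_zero_iff]
    constructor
    · rintro ⟨h1, h2⟩
      refine ⟨⟨fun i => (h1 i).trans (hdvd i), fun h => h2 fun i => ?_⟩, h1⟩
      exact absurd (h i) (hn i).ne'
    · rintro ⟨⟨-, h2⟩, h3⟩
      exact ⟨h3, fun h => h2 fun i => absurd (h i) (hd0 i).ne'⟩
  rw [Finset.sum_congr rfl h1, Finset.sum_comm]
  refine Finset.sum_congr rfl fun e he => ?_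
  rw [Nat.mem_divisors] at he
  have hedvd : ∀ i, e ∣ n i := fun i =>
    he.1.trans (Finset.gcd_dvd (Finset.mem_univ i))
  rw [← Finset.sum_filter, Finset.sum_const, smul_eq_mul, mul_comm]
  congr 1
  have : (Fintype.piFinset fun i => (n i).divisors).filter (fun d => ∀ i, e ∣ d i)
      = Fintype.piFinset fun i => (n i).divisors.filter (fun x => e ∣ x) := by
    ext d
    simp only [Finset.mem_filter, Fintype.mem_piFinset, forall_and]
  rw [this, Fintype.card_piFinset]
  exact Finset.prod_congr rfl fun i _ => card_divisors_filter_dvd (hedvd i) (hn i)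
end

section
/- If 2^r − 1 = p is a Mersenne prime, then the r-tuple (p, p, ..., p) is a perfect r-tuple, i.e., σ(p,...,p) = 2·gcd(p,...,p) = 2p, where σ(n₁,...,nᵣ) = ∑_{d₁∣n₁,...,dᵣ∣nᵣ} gcd(d₁,...,dᵣ). -/
open Finset

theorem mersenne_gives_perfect_tuple {r : ℕ} (hp : Nat.Prime (2 ^ r - 1)) :
    (∑ d ∈ Fintype.piFinset (fun _ : Fin r => (2 ^ r - 1).divisors),
        Finset.univ.gcd d)
      = 2 * Finset.univ.gcd (fun _ : Fin r => 2 ^ r - 1) ∧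
    2 * Finset.univ.gcd (fun _ : Fin r => 2 ^ r - 1) = 2 * (2 ^ r - 1) := by
  have hr : 2 ≤ r := by
    by_contra h
    interval_cases r <;> simp_all <;> exact absurd hp (by norm_num)
  set p := 2 ^ r - 1 with hpdef
  have hppos : 0 < p := hp.pos
  have hrpos : 0 < r := by omega
  have hgcd_const : Finset.univ.gcd (fun _ : Fin r => p) = p := by
    apply Nat.dvd_antisymm
    · exact Finset.gcd_dvd (Finset.mem_univ (⟨0, hrpos⟩ : Fin r))
    · exact Finset.dvd_gcd fun i _ => dvd_rfl
  refine ⟨?_, by rw [hgcd_const]⟩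
  rw [hgcd_const]
  have hkey : ∀ d ∈ Fintype.piFinset (fun _ : Fin r => p.divisors),
      Finset.univ.gcd d = 1 + (if d = (fun _ : Fin r => p) then p - 1 else 0) := by
    intro d hd
    simp only [Fintype.mem_piFinset] at hd
    by_cases hcase : d = fun _ : Fin r => p
    · subst hcase
      rw [hgcd_const, if_pos rfl]
      omega
    · rw [if_neg hcase]
      obtain ⟨i, hi⟩ := Function.ne_iff.mp hcase
      have hdi : d i = 1 ∨ d i = p := by
        have := hd i
        rcases (Nat.mem_divisors.mp this).1 with h
        rcases (Nat.Prime.eq_one_or_self_of_dvd hp _ h) with h1 | h2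
        · left; exact h1
        · right; exact h2
      have hdi1 : d i = 1 := by tauto
      have : Finset.univ.gcd d ∣ 1 := hdi1 ▸ Finset.gcd_dvd (Finset.mem_univ i)
      simpa using this
  rw [Finset.sum_congr rfl hkey, Finset.sum_add_distrib, Finset.sum_const,
    Finset.sum_ite_eq' _ (fun _ : Fin r => p) (fun _ => p - 1)]
  have hmem : (fun _ : Fin r => p) ∈ Fintype.piFinset (fun _ : Fin r => p.divisors) := by
    simp [Nat.mem_divisors, hppos.ne']
  rw [if_pos hmem]
  have hcard : (Fintype.piFinset (fun _ : Fin r => p.divisors)).card = 2 ^ r := by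
    rw [Fintype.card_piFinset]
    have h2 : #p.divisors = 2 := by
      rw [hp.divisors, Finset.card_insert_of_notMem (by simp [hp.one_lt.ne]),
        Finset.card_singleton]
    simp [h2]
  rw [hcard, smul_eq_mul, mul_one]
  have h2 : 2 ^ r = p + 1 := by
    have := Nat.one_le_two_pow (n := r)
    omega
  omega
end

section
/- For arithmetic functions f, g : ℕ^r → ℂ, the lcm convolution (f⊕g)(n₁,...,nᵣ) = ∑_{lcm(d₁,e₁)=n₁,...,lcm(dᵣ,eᵣ)=nᵣ} f(d₁,...,dᵣ)g(e₁,...,eᵣ) satisfies f⊕g = ((f*𝟏)·(g*𝟏)) * μ_r, where * is the r-variable Dirichlet convolution, 𝟏 is the constant 1 function, · is pointwise product, and μ_r(n₁,...,nᵣ) = μ(n₁)···μ(nᵣ). -/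
open Finset

/-- The `r`-variable Dirichlet convolution. -/
noncomputable def dirichletConvR {r : ℕ} (f g : (Fin r → ℕ) → ℂ) (n : Fin r → ℕ) : ℂ :=
  ∑ d ∈ Fintype.piFinset (fun i => (n i).divisors),
    f d * g (fun i => n i / d i)

/-- The `r`-variable lcm convolution. -/
noncomputable def lcmConvR {r : ℕ} (f g : (Fin r → ℕ) → ℂ) (n : Fin r → ℕ) : ℂ :=
  ∑ p ∈ ((Fintype.piFinset fun i => (n i).divisors) ×ˢ
          (Fintype.piFinset fun i => (n i).divisors)).filter
        (fun p => ∀ i, Nat.lcm (p.1 i) (p.2 i) = n i),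
    f p.1 * g p.2

/-- `μ_r(n₁,...,nᵣ) = μ(n₁)···μ(nᵣ)`. -/
noncomputable def muR {r : ℕ} (n : Fin r → ℕ) : ℂ :=
  ∏ i, ((ArithmeticFunction.moebius (n i) : ℤ) : ℂ)

lemma sum_moebius_C (m : ℕ) :
    ∑ d ∈ m.divisors, ((ArithmeticFunction.moebius d : ℤ) : ℂ) = if m = 1 then 1 else 0 := by
  have h := ArithmeticFunction.coe_mul_zeta_apply (R := ℂ)
    (f := ((ArithmeticFunction.moebius : ArithmeticFunction ℤ) : ArithmeticFunction ℂ)) (x := m)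
  rw [ArithmeticFunction.coe_moebius_mul_coe_zeta, ArithmeticFunction.one_apply] at h
  simpa [ArithmeticFunction.intCoe_apply] using h.symm

lemma key_sum {n l : ℕ} (hn : 0 < n) (hl : l ∣ n) :
    ∑ d ∈ n.divisors.filter (fun d => l ∣ d),
        ((ArithmeticFunction.moebius (n / d) : ℤ) : ℂ) = if l = n then 1 else 0 := by
  have hl0 : 0 < l := Nat.pos_of_dvd_of_pos hl hn
  have key : ∑ d ∈ n.divisors.filter (fun d => l ∣ d),
      ((ArithmeticFunction.moebius (n / d) : ℤ) : ℂ)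
      = ∑ e ∈ (n / l).divisors, ((ArithmeticFunction.moebius e : ℤ) : ℂ) := by
    refine Finset.sum_nbij' (i := fun d => n / d) (j := fun e => n / e) ?_ ?_ ?_ ?_ ?_
    · intro d hd
      simp only [Finset.mem_filter, Nat.mem_divisors] at hd
      obtain ⟨⟨hdn, _⟩, hld⟩ := hd
      have hd0 : 0 < d := Nat.pos_of_dvd_of_pos hdn hn
      obtain ⟨k, hk⟩ := hld
      obtain ⟨c, hc⟩ := hdn
      have hc0 : c ≠ 0 := by rintro rfl; simp at hc; omega
      have hnl : n / l = k * c := by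
        rw [hc, hk, Nat.mul_assoc, Nat.mul_div_cancel_left _ hl0]
      have hnd : n / d = c := by rw [hc, Nat.mul_div_cancel_left _ hd0]
      show n / d ∈ (n / l).divisors
      rw [hnd, hnl]
      refine Nat.mem_divisors.mpr ⟨⟨k, mul_comm k c⟩, ?_⟩
      rw [← hnl]
      exact (Nat.div_pos (Nat.le_of_dvd hn hl) hl0).ne'
    · intro e he
      simp only [Nat.mem_divisors] at he
      obtain ⟨hedvd, hnl0⟩ := he
      obtain ⟨c, hc⟩ := hedvd
      have hn' : n = e * (l * c) := by
        have := Nat.div_mul_cancel hl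
        calc n = n / l * l := this.symm
        _ = e * c * l := by rw [hc]
        _ = e * (l * c) := by ring
      have he0 : 0 < e := by rcases Nat.eq_zero_or_pos e with h | h; · subst h; simp at hc; omega
                             · exact h
      have hne : n / e = l * c := by rw [hn', Nat.mul_div_cancel_left _ he0]
      show n / e ∈ n.divisors.filter (fun d => l ∣ d)
      refine Finset.mem_filter.mpr ⟨Nat.mem_divisors.mpr ⟨?_, hn.ne'⟩, ?_⟩
      · rw [hne]; exact ⟨e, by rw [hn']; ring⟩
      · rw [hne]; exact Dvd.intro c rfl
    · intro d hd
      simp only [Finset.mem_filter, Nat.mem_divisors] at hd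
      exact Nat.div_div_self hd.1.1 hn.ne'
    · intro e he
      simp only [Nat.mem_divisors] at he
      exact Nat.div_div_self (he.1.trans (Nat.div_dvd_of_dvd hl)) hn.ne'
    · intro d hd; rfl
  rw [key, sum_moebius_C]
  congr 1
  rw [eq_iff_iff]
  constructor
  · intro h
    have := Nat.eq_mul_of_div_eq_right hl h
    omega
  · rintro rfl
    exact Nat.div_self hn

theorem lcmConvR_eq_dirichlet {r : ℕ} (f g : (Fin r → ℕ) → ℂ)
    (n : Fin r → ℕ) (hn : ∀ i, 0 < n i) :
    lcmConvR f g n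
      = dirichletConvR
          (fun m => dirichletConvR f (fun _ => 1) m *
                    dirichletConvR g (fun _ => 1) m)
          muR n := by
  classical
  unfold lcmConvR dirichletConvR
  simp only [mul_one]
  -- expand product of sums
  have step1 : ∀ d ∈ Fintype.piFinset (fun i => (n i).divisors),
      (∑ a ∈ Fintype.piFinset (fun i => (d i).divisors), f a) *
        (∑ b ∈ Fintype.piFinset (fun i => (d i).divisors), g b) *
        muR (fun i => n i / d i)
      = ∑ p ∈ (Fintype.piFinset (fun i => (d i).divisors)) ×ˢ
            (Fintype.piFinset (fun i => (d i).divisors)),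
          f p.1 * g p.2 * muR (fun i => n i / d i) := by
    intro d _
    rw [Finset.sum_product, Finset.sum_mul_sum, Finset.sum_mul]
    exact Finset.sum_congr rfl fun x _ => by rw [Finset.sum_mul]
  rw [Finset.sum_congr rfl step1]
  -- swap the order of summation
  rw [Finset.sum_comm' (s' := fun p =>
      (Fintype.piFinset (fun i => (n i).divisors)).filter
        (fun d => ∀ i, Nat.lcm (p.1 i) (p.2 i) ∣ d i))
    (t' := (Fintype.piFinset (fun i => (n i).divisors)) ×ˢ
        (Fintype.piFinset (fun i => (n i).divisors)))
    (h := by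
      rintro d ⟨a, b⟩
      simp only [Finset.mem_filter, Finset.mem_product, Fintype.mem_piFinset, Nat.mem_divisors]
      constructor
      · rintro ⟨hd, ha, hb⟩
        refine ⟨⟨hd, fun i => Nat.lcm_dvd (ha i).1 (hb i).1⟩,
          fun i => ⟨(ha i).1.trans (hd i).1, (hn i).ne'⟩,
          fun i => ⟨(hb i).1.trans (hd i).1, (hn i).ne'⟩⟩
      · rintro ⟨⟨hd, hlcm⟩, ha, hb⟩
        have hd0 : ∀ i, d i ≠ 0 := fun i =>
          (Nat.pos_of_dvd_of_pos ((hd i).1) (hn i)).ne'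
        exact ⟨hd, fun i => ⟨(Nat.dvd_lcm_left _ _).trans (hlcm i), hd0 i⟩,
          fun i => ⟨(Nat.dvd_lcm_right _ _).trans (hlcm i), hd0 i⟩⟩)]
  -- evaluate the inner sum
  rw [Finset.sum_filter]
  refine Finset.sum_congr rfl ?_
  rintro ⟨a, b⟩ hab
  simp only [Finset.mem_product, Fintype.mem_piFinset, Nat.mem_divisors] at hab
  obtain ⟨ha, hb⟩ := hab
  have hfilter : (Fintype.piFinset (fun i => (n i).divisors)).filter
        (fun d => ∀ i, Nat.lcm (a i) (b i) ∣ d i)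
      = Fintype.piFinset (fun i => (n i).divisors.filter (fun d => Nat.lcm (a i) (b i) ∣ d)) := by
    ext d
    simp only [Finset.mem_filter, Fintype.mem_piFinset]
    constructor
    · rintro ⟨h1, h2⟩ i; exact ⟨h1 i, h2 i⟩
    · intro h; exact ⟨fun i => (h i).1, fun i => (h i).2⟩
  rw [hfilter]
  have : ∑ d ∈ Fintype.piFinset
        (fun i => (n i).divisors.filter (fun d => Nat.lcm (a i) (b i) ∣ d)),
      f a * g b * muR (fun i => n i / d i)
      = f a * g b * ∑ d ∈ Fintype.piFinset
        (fun i => (n i).divisors.filter (fun d => Nat.lcm (a i) (b i) ∣ d)),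
      muR (fun i => n i / d i) := by
    rw [Finset.mul_sum]
  rw [this]
  unfold muR
  have hps := Finset.prod_univ_sum
    (fun i => (n i).divisors.filter (fun d => Nat.lcm (a i) (b i) ∣ d))
    (fun i x => ((ArithmeticFunction.moebius (n i / x) : ℤ) : ℂ))
  rw [← hps]
  have hprod : ∀ i, ∑ x ∈ (n i).divisors.filter (fun d => Nat.lcm (a i) (b i) ∣ d),
      ((ArithmeticFunction.moebius (n i / x) : ℤ) : ℂ)
      = if Nat.lcm (a i) (b i) = n i then 1 else 0 := fun i =>
    key_sum (hn i) (Nat.lcm_dvd (ha i).1 (hb i).1)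
  rw [Finset.prod_congr rfl (fun i _ => hprod i), Finset.prod_boole]
  simp only [Finset.mem_univ, forall_true_left]
  split <;> simp
end

section
/- If f : ℕ^r → ℂ is multiplicative, then its lcm convolute Ψ_lcm(f)(n) = ∑_{lcm(d₁,...,dᵣ)=n} f(d₁,...,dᵣ) is a multiplicative function of one variable; moreover Ψ_lcm(f) = F * μ, where F(n) = ∑_{d₁∣n,...,dᵣ∣n} f(d₁,...,dᵣ), * is one-variable Dirichlet convolution, and μ is the Möbius function. -/
open Finset

/-- `f : ℕ^r → ℂ` is multiplicative in the several-variables sense. -/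
def IsMultiplicativeR {r : ℕ} (f : (Fin r → ℕ) → ℂ) : Prop :=
  (∃ n : Fin r → ℕ, (∀ i, 0 < n i) ∧ f n ≠ 0) ∧
    ∀ m n : Fin r → ℕ, (∀ i, 0 < m i) → (∀ i, 0 < n i) →
      Nat.Coprime (∏ i, m i) (∏ i, n i) →
      f (fun i => m i * n i) = f m * f n

/-- The lcm convolute `Ψ_lcm(f)(n) = ∑_{lcm(d₁,…,dᵣ) = n} f(d₁,…,dᵣ)`. -/
noncomputable def psiLcm {r : ℕ} (f : (Fin r → ℕ) → ℂ) (n : ℕ) : ℂ :=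
  ∑ d ∈ (Fintype.piFinset fun _ : Fin r => n.divisors).filter
      (fun d => Finset.univ.lcm d = n), f d

/-- `F(n) = ∑_{d₁∣n,…,dᵣ∣n} f(d₁,…,dᵣ)`. -/
noncomputable def sumOverDivisorTuples {r : ℕ} (f : (Fin r → ℕ) → ℂ) (n : ℕ) : ℂ :=
  ∑ d ∈ Fintype.piFinset fun _ : Fin r => n.divisors, f d

lemma aux_f_one {r : ℕ} (f : (Fin r → ℕ) → ℂ) (hf : IsMultiplicativeR f) :
    f (fun _ => 1) = 1 := by
  obtain ⟨⟨n, hn, hfn⟩, hmul⟩ := hf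
  have h := hmul n (fun _ => 1) hn (fun _ => one_pos) (by simp [Nat.Coprime])
  simp only [mul_one] at h
  have : f n = f n * f (fun _ => 1) := by simpa using h
  field_simp at this
  tauto

lemma aux_sot_one {r : ℕ} (f : (Fin r → ℕ) → ℂ) (hf : IsMultiplicativeR f) :
    sumOverDivisorTuples f 1 = 1 := by
  rw [sumOverDivisorTuples]
  have : (Fintype.piFinset fun _ : Fin r => Nat.divisors 1) = {fun _ => 1} := by
    ext d
    simp [Fintype.mem_piFinset, Nat.divisors_one, funext_iff]
  rw [this, Finset.sum_singleton, aux_f_one f hf]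

lemma aux_sot_mul {r : ℕ} (f : (Fin r → ℕ) → ℂ) (hf : IsMultiplicativeR f)
    {m n : ℕ} (hm : 0 < m) (hn : 0 < n) (h : Nat.Coprime m n) :
    sumOverDivisorTuples f (m * n) = sumOverDivisorTuples f m * sumOverDivisorTuples f n := by
  have key : ∑ d ∈ Fintype.piFinset (fun _ : Fin r => (m * n).divisors), f d =
      ∑ p ∈ (Fintype.piFinset (fun _ : Fin r => m.divisors)) ×ˢ
        (Fintype.piFinset (fun _ : Fin r => n.divisors)),
        f (fun i => p.1 i * p.2 i) := by
    refine Finset.sum_nbij' (fun d => (fun i => Nat.gcd (d i) m, fun i => Nat.gcd (d i) n))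
      (fun p => fun i => p.1 i * p.2 i) ?_ ?_ ?_ ?_ ?_
    · intro d hd
      simp only [Fintype.mem_piFinset, Nat.mem_divisors] at hd
      simp only [Finset.mem_product, Fintype.mem_piFinset, Nat.mem_divisors]
      exact ⟨fun i => ⟨Nat.gcd_dvd_right _ _, hm.ne'⟩, fun i => ⟨Nat.gcd_dvd_right _ _, hn.ne'⟩⟩
    · intro p hp
      simp only [Finset.mem_product, Fintype.mem_piFinset, Nat.mem_divisors] at hp
      simp only [Fintype.mem_piFinset, Nat.mem_divisors]
      exact fun i => ⟨mul_dvd_mul (hp.1 i).1 (hp.2 i).1, mul_ne_zero hm.ne' hn.ne'⟩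
    · intro d hd
      simp only [Fintype.mem_piFinset, Nat.mem_divisors] at hd
      funext i
      exact (Nat.gcd_mul_gcd_eq_iff_dvd_mul_of_coprime h).2 (hd i).1
    · intro p hp
      simp only [Finset.mem_product, Fintype.mem_piFinset, Nat.mem_divisors] at hp
      have e1 : ∀ i, Nat.gcd (p.1 i * p.2 i) m = p.1 i := fun i => by
        have hcop : Nat.Coprime (p.2 i) m := Nat.Coprime.coprime_dvd_left (hp.2 i).1 h.symm
        rw [hcop.gcd_mul_right_cancel (p.1 i), Nat.gcd_eq_left (hp.1 i).1]
      have e2 : ∀ i, Nat.gcd (p.1 i * p.2 i) n = p.2 i := fun i => by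
        have hcop : Nat.Coprime (p.1 i) n := Nat.Coprime.coprime_dvd_left (hp.1 i).1 h
        rw [hcop.gcd_mul_left_cancel (p.2 i), Nat.gcd_eq_left (hp.2 i).1]
      simp only [e1, e2]
    · intro d hd
      simp only [Fintype.mem_piFinset, Nat.mem_divisors] at hd
      congr 1
      funext i
      exact ((Nat.gcd_mul_gcd_eq_iff_dvd_mul_of_coprime h).2 (hd i).1).symm
  rw [sumOverDivisorTuples, sumOverDivisorTuples, sumOverDivisorTuples, key,
    Finset.sum_product]
  rw [Finset.sum_mul_sum]
  refine Finset.sum_congr rfl fun a ha => Finset.sum_congr rfl fun b hb => ?_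
  simp only [Fintype.mem_piFinset, Nat.mem_divisors] at ha hb
  refine hf.2 a b (fun i => Nat.pos_of_mem_divisors (Nat.mem_divisors.2 (ha i)))
    (fun i => Nat.pos_of_mem_divisors (Nat.mem_divisors.2 (hb i))) ?_
  have h1 : (∏ i, a i) ∣ m ^ r := by
    calc (∏ i, a i) ∣ ∏ _i : Fin r, m := Finset.prod_dvd_prod_of_dvd _ _ (fun i _ => (ha i).1)
    _ = m ^ r := by simp
  have h2 : (∏ i, b i) ∣ n ^ r := by
    calc (∏ i, b i) ∣ ∏ _i : Fin r, n := Finset.prod_dvd_prod_of_dvd _ _ (fun i _ => (hb i).1)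
    _ = n ^ r := by simp
  exact Nat.Coprime.coprime_dvd_right h2 (Nat.Coprime.coprime_dvd_left h1 (h.pow r r))

lemma aux_sum_psi {r : ℕ} (f : (Fin r → ℕ) → ℂ) {n : ℕ} (hn : 0 < n) :
    ∑ d ∈ n.divisors, psiLcm f d = sumOverDivisorTuples f n := by
  rw [sumOverDivisorTuples,
    ← Finset.sum_fiberwise_of_maps_to (g := fun d : Fin r → ℕ => Finset.univ.lcm d)
      (t := n.divisors) ?hmaps]
  case hmaps =>
    intro d hd
    simp only [Fintype.mem_piFinset, Nat.mem_divisors] at hd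
    exact Nat.mem_divisors.2 ⟨Finset.lcm_dvd fun i _ => (hd i).1, hn.ne'⟩
  refine Finset.sum_congr rfl fun m hm => ?_
  rw [psiLcm]
  congr 1
  ext d
  simp only [Finset.mem_filter, Fintype.mem_piFinset, Nat.mem_divisors]
  constructor
  · rintro ⟨hd, hl⟩
    exact ⟨fun i => ⟨(hd i).1.trans (Nat.mem_divisors.1 hm).1, hn.ne'⟩, hl⟩
  · rintro ⟨hd, hl⟩
    exact ⟨fun i => ⟨hl ▸ Finset.dvd_lcm (Finset.mem_univ i),
      (Nat.pos_of_mem_divisors hm).ne'⟩, hl⟩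

theorem psiLcm_multiplicative_and_eq_conv_moebius {r : ℕ}
    (f : (Fin r → ℕ) → ℂ) (hf : IsMultiplicativeR f) :
    IsMultiplicative1 (psiLcm f) ∧
      ∀ n : ℕ, 0 < n →
        psiLcm f n = ∑ d ∈ n.divisors,
          sumOverDivisorTuples f d * ((ArithmeticFunction.moebius (n / d) : ℤ) : ℂ) := by
  have inv := (ArithmeticFunction.sum_eq_iff_sum_mul_moebius_eq
      (f := psiLcm f) (g := sumOverDivisorTuples f)).1 (fun k hk => aux_sum_psi f hk)
  have part2 : ∀ n : ℕ, 0 < n → psiLcm f n = ∑ d ∈ n.divisors,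
      sumOverDivisorTuples f d * ((ArithmeticFunction.moebius (n / d) : ℤ) : ℂ) := by
    intro n hn
    rw [← inv n hn, Nat.sum_divisorsAntidiagonal'
      (f := fun a b => ((ArithmeticFunction.moebius a : ℤ) : ℂ) * sumOverDivisorTuples f b)]
    exact Finset.sum_congr rfl fun d _ => mul_comm _ _
  set F : ArithmeticFunction ℂ :=
    ⟨fun k => if k = 0 then 0 else sumOverDivisorTuples f k, rfl⟩ with hFdef
  have hFapp : ∀ k : ℕ, k ≠ 0 → F k = sumOverDivisorTuples f k := fun k hk => by
    simp [hFdef, ArithmeticFunction.coe_mk, hk]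
  have hFm : F.IsMultiplicative := by
    constructor
    · rw [hFapp 1 one_ne_zero, aux_sot_one f hf]
    · intro a b hab
      rcases Nat.eq_zero_or_pos a with ha | ha
      · subst ha
        have hb1 : b = 1 := Nat.coprime_zero_left b |>.1 hab
        subst hb1
        simp
      rcases Nat.eq_zero_or_pos b with hb | hb
      · subst hb
        have ha1 : a = 1 := Nat.coprime_zero_right a |>.1 hab
        subst ha1
        simp
      rw [hFapp _ (mul_ne_zero ha.ne' hb.ne'), hFapp _ ha.ne', hFapp _ hb.ne',
        aux_sot_mul f hf ha hb hab]
  have hμ : (((ArithmeticFunction.moebius : ArithmeticFunction ℤ)) :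
      ArithmeticFunction ℂ).IsMultiplicative :=
    ArithmeticFunction.isMultiplicative_moebius.intCast
  have hΨ := hμ.mul hFm
  have hpsi_eq : ∀ k : ℕ, 0 < k →
      psiLcm f k = (((ArithmeticFunction.moebius : ArithmeticFunction ℤ) :
        ArithmeticFunction ℂ) * F) k := by
    intro k hk
    rw [ArithmeticFunction.mul_apply, ← inv k hk]
    refine Finset.sum_congr rfl fun x hx => ?_
    have hx2 : x.2 ≠ 0 :=
      (Nat.pos_of_mem_divisors (Nat.snd_mem_divisors_of_mem_antidiagonal hx)).ne'
    rw [ArithmeticFunction.intCoe_apply, hFapp _ hx2]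
  refine ⟨⟨⟨1, one_pos, ?_⟩, ?_⟩, part2⟩
  · rw [hpsi_eq 1 one_pos, hΨ.map_one]
    exact one_ne_zero
  · intro a b ha hb hab
    rw [hpsi_eq _ (mul_pos ha hb), hpsi_eq a ha, hpsi_eq b hb, hΨ.map_mul_of_coprime hab]
end

section
/- For every positive integer n, the number of ordered r-tuples (d₁,...,dᵣ) of positive integers with lcm(d₁,...,dᵣ) = n equals M_r(n) = ∑_{ab=n} μ(a)τ(b)^r = ∏_{p^ν ∥ n} ((ν+1)^r − ν^r). -/
open Finset ArithmeticFunction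
open scoped ArithmeticFunction.Moebius ArithmeticFunction.sigma

lemma fiber_eq_aux (r : ℕ) {n d : ℕ} (hd : d ∈ n.divisors) :
    ((Fintype.piFinset fun _ : Fin r => n.divisors).filter
        (fun f => Finset.univ.lcm f = d))
      = ((Fintype.piFinset fun _ : Fin r => d.divisors).filter
        (fun f => Finset.univ.lcm f = d)) := by
  obtain ⟨hdn, hn0⟩ := Nat.mem_divisors.mp hd
  have hd0 : d ≠ 0 := by
    rintro rfl; exact hn0 (zero_dvd_iff.mp hdn)
  ext f
  simp only [Finset.mem_filter, Fintype.mem_piFinset, Nat.mem_divisors]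
  constructor
  · rintro ⟨h1, h2⟩
    exact ⟨fun i => ⟨h2 ▸ Finset.dvd_lcm (mem_univ i), hd0⟩, h2⟩
  · rintro ⟨h1, h2⟩
    exact ⟨fun i => ⟨(h1 i).1.trans hdn, hn0⟩, h2⟩

lemma sum_fibers (r : ℕ) : ∀ n > 0,
    (∑ d ∈ n.divisors,
      (((Fintype.piFinset fun _ : Fin r => d.divisors).filter
        (fun f => Finset.univ.lcm f = d)).card : ℤ))
      = (n.divisors.card : ℤ) ^ r := by
  intro n hn
  have hcard : (Fintype.piFinset fun _ : Fin r => n.divisors).card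
      = n.divisors.card ^ r := by
    simp [Fintype.card_piFinset]
  have hfib := Finset.card_eq_sum_card_fiberwise
    (f := fun f : Fin r → ℕ => Finset.univ.lcm f)
    (s := Fintype.piFinset fun _ : Fin r => n.divisors) (t := n.divisors)
    (fun f hf => by
      rw [Finset.mem_coe, Nat.mem_divisors]
      refine ⟨Finset.lcm_dvd fun i _ => ?_, hn.ne'⟩
      exact (Nat.mem_divisors.mp ((Fintype.mem_piFinset.mp (Finset.mem_coe.mp hf)) i)).1)
  have key : ∑ d ∈ n.divisors,
      ((Fintype.piFinset fun _ : Fin r => d.divisors).filter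
        (fun f => Finset.univ.lcm f = d)).card = n.divisors.card ^ r := by
    rw [← hcard, hfib]
    exact (Finset.sum_congr rfl fun d hd => by rw [fiber_eq_aux r hd]).symm
  exact_mod_cast congrArg (Nat.cast : ℕ → ℤ) key

lemma card_divisors_pp {p : ℕ} (hp : p.Prime) (j : ℕ) :
    (p ^ j).divisors.card = j + 1 := by
  rw [Nat.divisors_prime_pow hp, Finset.card_map, Finset.card_range]

lemma sum_pp (r : ℕ) {p k : ℕ} (hp : p.Prime) (hk : k ≠ 0) :
    ∑ a ∈ (p ^ k).divisors, (μ a : ℤ) * (((p ^ k / a).divisors.card : ℤ)) ^ r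
      = ((k : ℤ) + 1) ^ r - (k : ℤ) ^ r := by
  obtain ⟨m, rfl⟩ := Nat.exists_eq_succ_of_ne_zero hk
  rw [Nat.sum_divisors_prime_pow hp, Finset.sum_range_succ', Finset.sum_range_succ']
  have hz : ∀ i ∈ Finset.range m,
      (μ (p ^ (i + 1 + 1)) : ℤ) * (((p ^ (m + 1) / p ^ (i + 1 + 1)).divisors.card : ℤ)) ^ r = 0 := by
    intro i _
    rw [moebius_apply_prime_pow hp (by omega), if_neg (by omega)]
    ring
  rw [Finset.sum_congr rfl hz, Finset.sum_const_zero, zero_add]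
  have h0 : p ^ (m + 1) / p ^ 0 = p ^ (m + 1) := by
    rw [Nat.pow_div (by omega) hp.pos]; congr 1
  have h1 : p ^ (m + 1) / p ^ (0 + 1) = p ^ m := by
    rw [Nat.pow_div (by omega) hp.pos]; congr 1
  rw [h0, h1, pow_zero, card_divisors_pp hp, card_divisors_pp hp, moebius_apply_one]
  simp only [zero_add, pow_one, moebius_apply_prime hp]
  push_cast
  ring

theorem card_lcm_factorizations (r n : ℕ) (hn : 0 < n) :
    (((Fintype.piFinset fun _ : Fin r => n.divisors).filter
        (fun d => Finset.univ.lcm d = n)).card : ℤ)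
      = ∑ a ∈ n.divisors,
          ArithmeticFunction.moebius a * ((n / a).divisors.card : ℤ) ^ r ∧
    (((Fintype.piFinset fun _ : Fin r => n.divisors).filter
        (fun d => Finset.univ.lcm d = n)).card : ℤ)
      = ∏ p ∈ n.primeFactors,
          (((n.factorization p : ℤ) + 1) ^ r - (n.factorization p : ℤ) ^ r) := by
  have hmoeb := (ArithmeticFunction.sum_eq_iff_sum_smul_moebius_eq
    (f := fun d => (((Fintype.piFinset fun _ : Fin r => d.divisors).filter
        (fun f => Finset.univ.lcm f = d)).card : ℤ))
    (g := fun n => (n.divisors.card : ℤ) ^ r)).mp (sum_fibers r) n hn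
  rw [Nat.sum_divisorsAntidiagonal
    (f := fun a b => (μ a : ℤ) • ((b.divisors.card : ℤ) ^ r))] at hmoeb
  have h1 : (((Fintype.piFinset fun _ : Fin r => n.divisors).filter
        (fun d => Finset.univ.lcm d = n)).card : ℤ)
      = ∑ a ∈ n.divisors,
          ArithmeticFunction.moebius a * ((n / a).divisors.card : ℤ) ^ r := by
    rw [← hmoeb]
    simp [zsmul_eq_mul]
  refine ⟨h1, ?_⟩
  set T : ArithmeticFunction ℤ :=
    ((ArithmeticFunction.ppow (σ 0) r : ArithmeticFunction ℕ) : ArithmeticFunction ℤ) with hTdef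
  have hT : ∀ x : ℕ, x ≠ 0 → T x = (x.divisors.card : ℤ) ^ r := by
    intro x hx
    cases r with
    | zero => simp [hTdef, ArithmeticFunction.ppow_zero, natCoe_apply, hx]
    | succ k =>
        rw [hTdef, natCoe_apply, ArithmeticFunction.ppow_apply (Nat.succ_pos k),
          sigma_zero_apply]
        rw [pow_succ]
        push_cast
        ring
  have hF : ((μ : ArithmeticFunction ℤ) * T).IsMultiplicative :=
    isMultiplicative_moebius.mul isMultiplicative_sigma.ppow.natCast
  have hFn : ∀ m : ℕ, m ≠ 0 → ((μ : ArithmeticFunction ℤ) * T) m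
      = ∑ a ∈ m.divisors, (μ a : ℤ) * ((m / a).divisors.card : ℤ) ^ r := by
    intro m hm
    rw [ArithmeticFunction.mul_apply,
      Nat.sum_divisorsAntidiagonal (f := fun a b => (μ a : ℤ) * T b)]
    refine Finset.sum_congr rfl fun a ha => ?_
    have ha0 := Nat.pos_of_mem_divisors ha
    have hdvd := Nat.dvd_of_mem_divisors ha
    have hne : m / a ≠ 0 := by
      have := Nat.div_pos (Nat.le_of_dvd (Nat.pos_of_ne_zero hm) hdvd) ha0
      omega
    rw [hT _ hne]
  rw [h1, ← hFn n hn.ne',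
    ArithmeticFunction.IsMultiplicative.multiplicative_factorization _ hF hn.ne',
    Nat.prod_factorization_eq_prod_primeFactors]
  refine Finset.prod_congr rfl fun p hp => ?_
  have hpp := Nat.prime_of_mem_primeFactors hp
  have hk : n.factorization p ≠ 0 := by
    have := Nat.Prime.factorization_pos_of_dvd hpp hn.ne'
      (Nat.dvd_of_mem_primeFactors hp)
    omega
  rw [hFn _ (pow_ne_zero _ hpp.pos.ne'), sum_pp r hpp hk]
end

section
/- For every function g : ℕ → ℂ and every positive integer n: ∑_{d₁···dᵣ=n} g(gcd(d₁,...,dᵣ)) = ∑_{a^r b = n} (μ*g)(a)·τ_r(b), where * is one-variable Dirichlet convolution and τ_r is the Piltz divisor function of order r. -/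
open Finset

/-- The Piltz divisor function `τ_r(n)`: the number of ordered `r`-tuples of
positive integers with product `n`. -/
def piltz (r n : ℕ) : ℕ :=
  ((Fintype.piFinset fun _ : Fin r => n.divisors).filter
      (fun d => ∏ i, d i = n)).card

lemma card_filter_eq_piltz (r n a : ℕ) (hr : 0 < r) (hn : 0 < n)
    (ha : 0 < a) (har : a ^ r ∣ n) :
    (((Fintype.piFinset fun _ : Fin r => n.divisors).filter
        (fun d => ∏ i, d i = n)).filter
        (fun d => ∀ i, a ∣ d i)).card = piltz r (n / a ^ r) := by
  have hm : 0 < n / a ^ r := Nat.div_pos (Nat.le_of_dvd hn har) (pow_pos ha r)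
  have hman : a ^ r * (n / a ^ r) = n := Nat.mul_div_cancel' har
  rw [piltz]
  apply Finset.card_bij' (fun d _ => fun i => d i / a) (fun e _ => fun i => a * e i)
  · intro d hd
    simp only [Finset.mem_filter, Fintype.mem_piFinset, Nat.mem_divisors] at hd ⊢
    obtain ⟨⟨hdiv, hprod⟩, hdvd⟩ := hd
    have hdi : ∀ i, d i = a * (d i / a) := fun i => (Nat.mul_div_cancel' (hdvd i)).symm
    have hpe : a ^ r * ∏ i, d i / a = n := by
      rw [← hprod]
      calc a ^ r * ∏ i, d i / a = ∏ i, a * (d i / a) := by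
            rw [Finset.prod_mul_distrib, Finset.prod_const, Finset.card_univ,
              Fintype.card_fin]
          _ = ∏ i, d i := by
            exact Finset.prod_congr rfl fun i _ => (hdi i).symm
    have hprod' : ∏ i, d i / a = n / a ^ r := by
      rw [← hpe, Nat.mul_div_cancel_left _ (pow_pos ha r)]
    refine ⟨fun i => ⟨?_, hm.ne'⟩, hprod'⟩
    rw [← hprod']
    exact Finset.dvd_prod_of_mem _ (Finset.mem_univ i)
  · intro e he
    simp only [Finset.mem_filter, Fintype.mem_piFinset, Nat.mem_divisors] at he ⊢
    obtain ⟨hdiv, hprod⟩ := he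
    have hprod' : ∏ i, a * e i = n := by
      rw [Finset.prod_mul_distrib, Finset.prod_const, Finset.card_univ,
        Fintype.card_fin, hprod, hman]
    refine ⟨⟨fun i => ⟨?_, hn.ne'⟩, hprod'⟩, fun i => dvd_mul_right _ _⟩
    calc a * e i ∣ a ^ r * (n / a ^ r) :=
          mul_dvd_mul (dvd_pow_self a hr.ne') ((hdiv i).1)
      _ = n := hman
  · intro d hd
    simp only [Finset.mem_filter] at hd
    funext i
    exact Nat.mul_div_cancel' (hd.2 i)
  · intro e _
    funext i
    exact Nat.mul_div_cancel_left _ ha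

theorem sum_g_gcd_over_factorizations (r : ℕ) (hr : 0 < r) (g : ℕ → ℂ)
    (n : ℕ) (hn : 0 < n) :
    ∑ d ∈ (Fintype.piFinset fun _ : Fin r => n.divisors).filter
        (fun d => ∏ i, d i = n), g (Finset.univ.gcd d)
      = ∑ a ∈ n.divisors.filter (fun a => a ^ r ∣ n),
          (∑ t ∈ a.divisors,
            ((ArithmeticFunction.moebius t : ℤ) : ℂ) * g (a / t)) *
            (piltz r (n / a ^ r) : ℂ) := by
  set F : ℕ → ℂ := fun a => ∑ t ∈ a.divisors,
    ((ArithmeticFunction.moebius t : ℤ) : ℂ) * g (a / t) with hF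
  have hG : ∀ m > 0, ∑ a ∈ m.divisors, F a = g m := by
    rw [ArithmeticFunction.sum_eq_iff_sum_smul_moebius_eq]
    intro m hm
    rw [Nat.sum_divisorsAntidiagonal
      (fun x y => (ArithmeticFunction.moebius x : ℤ) • g y)]
    simp [hF, zsmul_eq_mul]
  set S := (Fintype.piFinset fun _ : Fin r => n.divisors).filter
    (fun d => ∏ i, d i = n) with hS
  have key : ∀ d ∈ S, Finset.univ.gcd d ∣ n ∧ 0 < Finset.univ.gcd d := by
    intro d hd
    simp only [hS, Finset.mem_filter, Fintype.mem_piFinset, Nat.mem_divisors] at hd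
    have i0 : Fin r := ⟨0, hr⟩
    have h1 : Finset.univ.gcd d ∣ d i0 := Finset.gcd_dvd (Finset.mem_univ i0)
    have h2 : d i0 ∣ n := (hd.1 i0).1
    exact ⟨h1.trans h2, Nat.pos_of_dvd_of_pos (h1.trans h2) hn⟩
  calc ∑ d ∈ S, g (Finset.univ.gcd d)
      = ∑ d ∈ S, ∑ a ∈ n.divisors, if a ∣ Finset.univ.gcd d then F a else 0 := by
        refine Finset.sum_congr rfl fun d hd => ?_
        obtain ⟨hdvd, hpos⟩ := key d hd
        rw [← hG _ hpos, ← Finset.sum_filter,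
          Nat.divisors_filter_dvd_of_dvd hn.ne' hdvd]
    _ = ∑ a ∈ n.divisors, F a * ((S.filter (fun d => a ∣ Finset.univ.gcd d)).card : ℂ) := by
        rw [Finset.sum_comm]
        refine Finset.sum_congr rfl fun a _ => ?_
        rw [← Finset.sum_filter, Finset.sum_const, nsmul_eq_mul, mul_comm]
    _ = ∑ a ∈ n.divisors.filter (fun a => a ^ r ∣ n),
          F a * ((S.filter (fun d => a ∣ Finset.univ.gcd d)).card : ℂ) := by
        refine (Finset.sum_subset (Finset.filter_subset _ _) ?_).symm
        intro a ha hna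
        simp only [Finset.mem_filter] at hna
        have hnar : ¬ a ^ r ∣ n := fun h => hna ⟨ha, h⟩
        have : S.filter (fun d => a ∣ Finset.univ.gcd d) = ∅ := by
          rw [Finset.filter_eq_empty_iff]
          intro d hd hdvd
          simp only [hS, Finset.mem_filter, Fintype.mem_piFinset] at hd
          apply hnar
          rw [← hd.2]
          have : ∀ i : Fin r, a ∣ d i := fun i =>
            hdvd.trans (Finset.gcd_dvd (Finset.mem_univ i))
          calc a ^ r = ∏ _i : Fin r, a := by
                rw [Finset.prod_const, Finset.card_univ, Fintype.card_fin]
            _ ∣ ∏ i, d i := Finset.prod_dvd_prod_of_dvd _ _ fun i _ => this i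
        rw [this]
        simp
    _ = ∑ a ∈ n.divisors.filter (fun a => a ^ r ∣ n),
          F a * (piltz r (n / a ^ r) : ℂ) := by
        refine Finset.sum_congr rfl fun a ha => ?_
        simp only [Finset.mem_filter, Nat.mem_divisors] at ha
        have hcongr : S.filter (fun d => a ∣ Finset.univ.gcd d)
            = S.filter (fun d => ∀ i, a ∣ d i) := by
          refine Finset.filter_congr fun d _ => ?_
          simp only [Finset.dvd_gcd_iff]
          constructor
          · exact fun h i => h i (Finset.mem_univ i)
          · exact fun h i _ => h i
        rw [hcongr, hS, card_filter_eq_piltz r n a hr hn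
          (Nat.pos_of_dvd_of_pos ha.1.1 hn) ha.2]
end

section
/- For every positive integer n: ∑_{lcm(d,e)=n} φ(gcd(d,e)) = ψ(n), where the sum is over ordered pairs (d,e) of positive integers with lcm(d,e) = n, φ is Euler's totient, and ψ(n) = n·∏_{p∣n}(1+1/p) is the Dedekind psi function. -/
open Finset ArithmeticFunction
open scoped ArithmeticFunction.Moebius

private def phiAF : ArithmeticFunction ℕ := ⟨Nat.totient, Nat.totient_zero⟩

private lemma phiAF_mult : phiAF.IsMultiplicative :=
  ⟨Nat.totient_one, fun h => Nat.totient_mul h⟩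

private lemma totient_lcm_gcd (d e : ℕ) :
    Nat.totient (Nat.lcm d e) * Nat.totient (Nat.gcd d e)
      = Nat.totient d * Nat.totient e :=
  phiAF_mult.lcm_apply_mul_gcd_apply

private noncomputable def fQ (m : ℕ) : ℚ :=
  ∑ p ∈ (m.divisors ×ˢ m.divisors).filter (fun p => Nat.lcm p.1 p.2 = m),
    (Nat.totient p.1 * Nat.totient p.2 : ℚ)

private lemma sum_fQ (n : ℕ) (hn : 0 < n) :
    ∑ i ∈ n.divisors, fQ i = (n : ℚ) ^ 2 := by
  have hmaps : ∀ p ∈ n.divisors ×ˢ n.divisors, Nat.lcm p.1 p.2 ∈ n.divisors := by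
    rintro ⟨d, e⟩ hp
    simp only [mem_product, Nat.mem_divisors] at hp
    exact Nat.mem_divisors.mpr ⟨Nat.lcm_dvd hp.1.1 hp.2.1, hn.ne'⟩
  have hfib : ∀ j ∈ n.divisors,
      (n.divisors ×ˢ n.divisors).filter (fun p => Nat.lcm p.1 p.2 = j)
        = (j.divisors ×ˢ j.divisors).filter (fun p => Nat.lcm p.1 p.2 = j) := by
    intro j hj
    rw [Nat.mem_divisors] at hj
    ext ⟨d, e⟩
    simp only [mem_filter, mem_product, Nat.mem_divisors]
    constructor
    · rintro ⟨⟨⟨hd, -⟩, ⟨he, -⟩⟩, hl⟩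
      have hj0 : j ≠ 0 := by rintro rfl; exact hn.ne' (by simpa using hj.1)
      exact ⟨⟨⟨hl ▸ Nat.dvd_lcm_left d e, hj0⟩, ⟨hl ▸ Nat.dvd_lcm_right d e, hj0⟩⟩, hl⟩
    · rintro ⟨⟨⟨hd, hj0⟩, ⟨he, -⟩⟩, hl⟩
      exact ⟨⟨⟨hd.trans hj.1, hn.ne'⟩, ⟨he.trans hj.1, hn.ne'⟩⟩, hl⟩
  calc ∑ i ∈ n.divisors, fQ i
      = ∑ i ∈ n.divisors, ∑ p ∈ (n.divisors ×ˢ n.divisors).filter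
          (fun p => Nat.lcm p.1 p.2 = i), (Nat.totient p.1 * Nat.totient p.2 : ℚ) := by
        refine Finset.sum_congr rfl fun j hj => ?_
        rw [fQ, hfib j hj]
    _ = ∑ p ∈ n.divisors ×ˢ n.divisors, (Nat.totient p.1 * Nat.totient p.2 : ℚ) :=
        Finset.sum_fiberwise_of_maps_to hmaps _
    _ = (∑ d ∈ n.divisors, (Nat.totient d : ℚ)) * (∑ e ∈ n.divisors, (Nat.totient e : ℚ)) := by
        rw [Finset.sum_mul_sum, Finset.sum_product]
    _ = (n : ℚ) ^ 2 := by
        have h1 : (∑ d ∈ n.divisors, (Nat.totient d : ℚ)) = (n : ℚ) := by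
          rw [← Nat.cast_sum, Nat.sum_totient]
        rw [h1, sq]

private lemma fQ_eq (n : ℕ) (hn : 0 < n) :
    fQ n = ∑ x ∈ n.divisorsAntidiagonal, (μ x.1 : ℚ) * (x.2 : ℚ) ^ 2 :=
  (ArithmeticFunction.sum_eq_iff_sum_mul_moebius_eq.mp
    (fun m hm => by exact_mod_cast sum_fQ m hm) n hn).symm

private noncomputable def BQ : ArithmeticFunction ℚ :=
  ((μ : ArithmeticFunction ℤ) : ArithmeticFunction ℚ) *
    ((pow 2 : ArithmeticFunction ℕ) : ArithmeticFunction ℚ)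

private lemma BQ_mult : BQ.IsMultiplicative :=
  (isMultiplicative_moebius.intCast).mul (isMultiplicative_pow.natCast)

private lemma BQ_apply (n : ℕ) :
    BQ n = ∑ x ∈ n.divisorsAntidiagonal, (μ x.1 : ℚ) * (x.2 : ℚ) ^ 2 := by
  simp only [BQ, ArithmeticFunction.mul_apply, ArithmeticFunction.intCoe_apply,
    ArithmeticFunction.natCoe_apply, ArithmeticFunction.pow_apply]
  refine Finset.sum_congr rfl fun x hx => ?_
  have : ¬(2 = 0 ∧ x.2 = 0) := by simp
  rw [if_neg this]
  push_cast
  ring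

private lemma BQ_pp {p k : ℕ} (hp : p.Prime) (hk : k ≠ 0) :
    BQ (p ^ k) = ((p : ℚ) ^ k) ^ 2 - ((p : ℚ) ^ (k - 1)) ^ 2 := by
  rw [BQ_apply, Nat.sum_divisorsAntidiagonal (fun a b => (μ a : ℚ) * (b : ℚ) ^ 2),
    Nat.sum_divisors_prime_pow hp]
  have hsub : ∑ i ∈ Finset.range (k + 1), (μ (p ^ i) : ℚ) * ((p ^ k / p ^ i : ℕ) : ℚ) ^ 2
      = ∑ i ∈ Finset.range 2, (μ (p ^ i) : ℚ) * ((p ^ k / p ^ i : ℕ) : ℚ) ^ 2 := by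
    refine (Finset.sum_subset (Finset.range_subset_range.mpr (by omega)) ?_).symm
    intro i hi hni
    have hi2 : 2 ≤ i := by simp at hni; omega
    rw [moebius_apply_prime_pow hp (by omega), if_neg (by omega)]
    simp
  rw [hsub, Finset.sum_range_succ, Finset.sum_range_one]
  have h0 : p ^ k / p ^ 0 = p ^ k := by simp
  have h1 : p ^ k / p ^ 1 = p ^ (k - 1) := Nat.pow_div (by omega) hp.pos
  rw [h0, h1, pow_zero, pow_one, moebius_apply_one, moebius_apply_prime hp]
  push_cast
  ring

private lemma prime_key {p k : ℕ} (hp : p.Prime) (hk : k ≠ 0) :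
    (p : ℚ) ^ k * (1 + 1 / (p : ℚ)) * ((p : ℚ) ^ (k - 1) * ((p : ℚ) - 1))
      = ((p : ℚ) ^ k) ^ 2 - ((p : ℚ) ^ (k - 1)) ^ 2 := by
  obtain ⟨m, rfl⟩ := Nat.exists_eq_succ_of_ne_zero hk
  have hp0 : (p : ℚ) ≠ 0 := Nat.cast_ne_zero.mpr hp.pos.ne'
  simp only [Nat.succ_sub_one]
  field_simp
  simp only [Nat.succ_eq_add_one]
  ring

theorem sum_totient_gcd_over_lcm_pairs_eq_dedekind_psi (n : ℕ) (hn : 0 < n) :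
    ((∑ p ∈ (n.divisors ×ˢ n.divisors).filter
        (fun p => Nat.lcm p.1 p.2 = n), Nat.totient (Nat.gcd p.1 p.2) : ℕ) : ℚ)
      = n * ∏ p ∈ n.primeFactors, (1 + 1 / (p : ℚ)) := by
  have hφ : (Nat.totient n : ℚ) ≠ 0 := by
    exact_mod_cast (Nat.totient_pos.mpr hn).ne'
  apply mul_right_cancel₀ hφ
  have hL : ((∑ p ∈ (n.divisors ×ˢ n.divisors).filter
        (fun p => Nat.lcm p.1 p.2 = n), Nat.totient (Nat.gcd p.1 p.2) : ℕ) : ℚ)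
        * (Nat.totient n : ℚ) = fQ n := by
    rw [fQ]
    push_cast
    rw [Finset.sum_mul]
    refine Finset.sum_congr rfl ?_
    rintro ⟨d, e⟩ hp
    simp only [mem_filter] at hp
    have h := totient_lcm_gcd d e
    rw [hp.2] at h
    have : (Nat.totient n : ℚ) * (Nat.totient (Nat.gcd d e) : ℚ)
        = (Nat.totient d : ℚ) * Nat.totient e := by exact_mod_cast h
    rw [mul_comm] at this
    exact_mod_cast this
  rw [hL, fQ_eq n hn, ← BQ_apply]
  have hprod : BQ n = ∏ p ∈ n.primeFactors,
      (((p : ℚ) ^ n.factorization p) ^ 2 - ((p : ℚ) ^ (n.factorization p - 1)) ^ 2) := by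
    rw [BQ_mult.multiplicative_factorization BQ hn.ne', Finsupp.prod,
      Nat.support_factorization]
    exact Finset.prod_congr rfl fun p hp => BQ_pp (Nat.prime_of_mem_primeFactors hp)
      (by rw [← Nat.support_factorization] at hp; exact Finsupp.mem_support_iff.mp hp)
  have hn' : (n : ℚ) = ∏ p ∈ n.primeFactors, (p : ℚ) ^ n.factorization p := by
    conv_lhs => rw [← Nat.factorization_prod_pow_eq_self hn.ne']
    rw [Finsupp.prod, Nat.support_factorization]
    push_cast
    rfl
  have hφ' : (Nat.totient n : ℚ)
      = ∏ p ∈ n.primeFactors, ((p : ℚ) ^ (n.factorization p - 1) * ((p : ℚ) - 1)) := by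
    rw [Nat.totient_eq_prod_factorization hn.ne', Finsupp.prod, Nat.support_factorization]
    push_cast
    refine Finset.prod_congr rfl fun p hp => ?_
    rw [Nat.cast_sub (Nat.prime_of_mem_primeFactors hp).one_le]
    push_cast
    ring
  rw [hprod, hn', hφ', ← Finset.prod_mul_distrib, ← Finset.prod_mul_distrib]
  refine (Finset.prod_congr rfl fun p hp => ?_).symm
  exact prime_key (Nat.prime_of_mem_primeFactors hp)
    (by rw [← Nat.support_factorization] at hp; exact Finsupp.mem_support_iff.mp hp)
end

section
/- For every positive integer n: ∑_{de=n} c_d(e) equals √n if n is a perfect square and 0 otherwise, where c_d(e) is the Ramanujan sum and the sum is over ordered pairs (d,e) of positive integers with de = n. -/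
open Finset

/-- The Ramanujan sum `c_d(e) = ∑_{t ∣ gcd(e,d)} t·μ(d/t)`. -/
def ramanujanSum (d e : ℕ) : ℤ :=
  ∑ t ∈ (Nat.gcd e d).divisors, (t : ℤ) * ArithmeticFunction.moebius (d / t)

lemma moebius_sum_divisors (m : ℕ) :
    ∑ s ∈ m.divisors, (ArithmeticFunction.moebius s : ℤ) = if m = 1 then 1 else 0 := by
  rw [← ArithmeticFunction.coe_mul_zeta_apply, ArithmeticFunction.moebius_mul_coe_zeta,
    ArithmeticFunction.one_apply]

theorem sum_ramanujan_dirichlet_convolute (n : ℕ) (hn : 0 < n) :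
    ∑ p ∈ n.divisorsAntidiagonal, ramanujanSum p.1 p.2
      = if IsSquare n then (Nat.sqrt n : ℤ) else 0 := by
  classical
  unfold ramanujanSum
  rw [Finset.sum_sigma']
  -- Reindex to triples (t, s, e') with t*t*s*e' = n
  rw [Finset.sum_nbij' (i := fun x => ((x.2, (x.1.1 / x.2, x.1.2 / x.2)) :
        ℕ × ℕ × ℕ))
      (j := fun y => (⟨(y.1 * y.2.1, y.1 * y.2.2), y.1⟩ :
        (p : ℕ × ℕ) × ℕ))
      (t := (n.divisors ×ˢ n.divisors ×ˢ n.divisors).filter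
        (fun y => y.1 * y.1 * y.2.1 * y.2.2 = n))
      (g := fun y => (y.1 : ℤ) * ArithmeticFunction.moebius y.2.1)]
  · -- now compute the sum over the filtered triple set
    rw [Finset.sum_filter]
    rw [Finset.sum_product]
    have key : ∀ t ∈ n.divisors,
        (∑ q ∈ n.divisors ×ˢ n.divisors,
          if t * t * q.1 * q.2 = n then (t : ℤ) * ArithmeticFunction.moebius q.1 else 0)
        = if t * t = n then (t : ℤ) else 0 := by
      intro t ht
      by_cases hdvd : t * t ∣ n
      · have hset : (n.divisors ×ˢ n.divisors).filter (fun q => t * t * q.1 * q.2 = n)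
            = (n / (t * t)).divisorsAntidiagonal := by
          ext q
          simp only [Finset.mem_filter, Finset.mem_product, Nat.mem_divisors,
            Nat.mem_divisorsAntidiagonal]
          have htt : 0 < t * t := Nat.pos_of_dvd_of_pos hdvd hn
          constructor
          · rintro ⟨⟨⟨h1, -⟩, ⟨h2, -⟩⟩, h3⟩
            have hn' : n = t * t * (q.1 * q.2) := by rw [← h3]; ring
            refine ⟨by rw [hn', Nat.mul_div_cancel_left _ htt], ?_⟩
            exact (Nat.div_pos (Nat.le_of_dvd hn hdvd) htt).ne'
          · rintro ⟨h1, h2⟩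
            have h3 : t * t * q.1 * q.2 = n := by
              rw [mul_assoc (t * t), h1, Nat.mul_div_cancel' hdvd]
            refine ⟨⟨⟨⟨t * t * q.2, by rw [← h3]; ring⟩, hn.ne'⟩,
              ⟨⟨t * t * q.1, by rw [← h3]; ring⟩, hn.ne'⟩⟩, h3⟩
        rw [← Finset.sum_filter, hset]
        rw [Nat.sum_divisorsAntidiagonal (fun s e => (t : ℤ) * ArithmeticFunction.moebius s)]
        rw [← Finset.mul_sum, moebius_sum_divisors]
        have ht0 : 0 < t := Nat.pos_of_mem_divisors ht
        by_cases hsq : t * t = n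
        · have : n / (t * t) = 1 := by rw [hsq, Nat.div_self hn]
          rw [if_pos this, if_pos hsq, mul_one]
        · have : n / (t * t) ≠ 1 := by
            intro h
            apply hsq
            have := Nat.div_mul_cancel hdvd
            rw [h, one_mul] at this; omega
          rw [if_neg this, if_neg hsq, mul_zero]
      · have hne : ¬ t * t = n := fun h => hdvd (h ▸ dvd_refl n)
        rw [if_neg hne]
        apply Finset.sum_eq_zero
        intro q hq
        rw [if_neg]
        intro h
        exact hdvd ⟨q.1 * q.2, by rw [← h]; ring⟩
    rw [Finset.sum_congr rfl key]
    by_cases hsq : IsSquare n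
    · obtain ⟨r, hr⟩ := hsq
      have hrs : Nat.sqrt n = r := by rw [hr, Nat.sqrt_eq]
      have hmem : Nat.sqrt n ∈ n.divisors := by
        rw [Nat.mem_divisors]
        exact ⟨⟨Nat.sqrt n, by rw [hrs]; exact hr⟩, hn.ne'⟩
      rw [if_pos ⟨r, hr⟩]
      rw [Finset.sum_eq_single (Nat.sqrt n)]
      · rw [if_pos (by rw [hrs]; exact hr.symm)]
      · intro t ht hne
        rw [if_neg]
        intro h
        exact hne (by rw [← Nat.sqrt_eq t, h])
      · exact fun h => absurd hmem h
    · rw [if_neg hsq]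
      apply Finset.sum_eq_zero
      intro t ht
      rw [if_neg]
      exact fun h => hsq ⟨t, h.symm⟩
  · -- forward map lands in target
    rintro ⟨⟨d, e⟩, t⟩ hx
    simp only [Finset.mem_sigma, Nat.mem_divisorsAntidiagonal, Nat.mem_divisors] at hx
    obtain ⟨⟨hde, hn0⟩, htg, hg0⟩ := hx
    have hte : t ∣ e := (Nat.dvd_gcd_iff.mp htg).1
    have htd : t ∣ d := (Nat.dvd_gcd_iff.mp htg).2
    have htn : t ∣ n := htd.trans ⟨e, hde.symm⟩
    simp only [Finset.mem_filter, Finset.mem_product, Nat.mem_divisors]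
    have h1 : t * (d / t) = d := Nat.mul_div_cancel' htd
    have h2 : t * (e / t) = e := Nat.mul_div_cancel' hte
    refine ⟨⟨⟨htn, hn0⟩, ⟨(Nat.div_dvd_of_dvd htd).trans ⟨e, hde.symm⟩, hn0⟩,
      ⟨(Nat.div_dvd_of_dvd hte).trans ⟨d, by rw [← hde]; ring⟩, hn0⟩⟩, ?_⟩
    calc t * t * (d / t) * (e / t) = (t * (d / t)) * (t * (e / t)) := by ring
      _ = n := by rw [h1, h2, hde]
  · -- backward map lands in source
    rintro ⟨t, s, e'⟩ hy
    simp only [Finset.mem_filter, Finset.mem_product, Nat.mem_divisors] at hy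
    obtain ⟨⟨⟨htn, hn0⟩, -, -⟩, heq⟩ := hy
    simp only [Finset.mem_sigma, Nat.mem_divisorsAntidiagonal, Nat.mem_divisors]
    refine ⟨⟨by rw [← heq]; ring, hn0⟩, Nat.dvd_gcd ⟨e', rfl⟩ ⟨s, rfl⟩, ?_⟩
    intro h
    rw [Nat.gcd_eq_zero_iff] at h
    rcases Nat.mul_eq_zero.mp h.1 with h0 | h0 <;> rw [h0] at heq <;> simp at heq <;> omega
  · -- left inverse
    rintro ⟨⟨d, e⟩, t⟩ hx
    simp only [Finset.mem_sigma, Nat.mem_divisorsAntidiagonal, Nat.mem_divisors] at hx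
    obtain ⟨⟨hde, hn0⟩, htg, hg0⟩ := hx
    have hte : t ∣ e := (Nat.dvd_gcd_iff.mp htg).1
    have htd : t ∣ d := (Nat.dvd_gcd_iff.mp htg).2
    simp [Nat.mul_div_cancel' htd, Nat.mul_div_cancel' hte]
  · -- right inverse
    rintro ⟨t, s, e'⟩ hy
    simp only [Finset.mem_filter, Finset.mem_product, Nat.mem_divisors] at hy
    obtain ⟨⟨⟨htn, hn0⟩, -, -⟩, heq⟩ := hy
    have ht0 : 0 < t := by
      rcases Nat.eq_zero_or_pos t with h | h
      · simp [h] at heq; omega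
      · exact h
    have h1 : t * s / t = s := Nat.mul_div_cancel_left s ht0
    have h2 : t * e' / t = e' := Nat.mul_div_cancel_left e' ht0
    show (⟨t, t * s / t, t * e' / t⟩ : ℕ × ℕ × ℕ) = (t, s, e')
    rw [h1, h2]
  · -- terms agree
    rintro ⟨⟨d, e⟩, t⟩ hx
    rfl
end

section
/- For every positive integer n: ∑_{lcm(d,e)=n} c_d(e) = φ(n), where c_d(e) is the Ramanujan sum, the sum runs over ordered pairs (d,e) with lcm(d,e) = n, and φ is Euler's totient function. -/
open Finset

open ArithmeticFunction in
/-- The sum of `μ d` over pairs `(d, e)` with `lcm d e = k` equals `μ k`. -/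
lemma sum_moebius_lcm (k : ℕ) (hk : 0 < k) :
    ∑ p ∈ (k.divisors ×ˢ k.divisors).filter
        (fun p => Nat.lcm p.1 p.2 = k), (moebius p.1 : ℤ) = moebius k := by
  have key : ∀ K > 0, ∑ k ∈ K.divisors,
      (∑ p ∈ (k.divisors ×ˢ k.divisors).filter
        (fun p => Nat.lcm p.1 p.2 = k), (moebius p.1 : ℤ)) =
      (if K = 1 then (1 : ℤ) else 0) := by
    intro K hK
    have hmaps : ∀ p ∈ K.divisors ×ˢ K.divisors,
        Nat.lcm p.1 p.2 ∈ K.divisors := by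
      rintro ⟨a, b⟩ hp
      rw [Finset.mem_product] at hp
      exact Nat.mem_divisors.mpr ⟨Nat.lcm_dvd (Nat.mem_divisors.mp hp.1).1
        (Nat.mem_divisors.mp hp.2).1, hK.ne'⟩
    have fib := Finset.sum_fiberwise_of_maps_to hmaps
      (fun p : ℕ × ℕ => (moebius p.1 : ℤ))
    rw [Finset.sum_congr rfl (fun k hk => ?_), fib]
    · rw [Finset.sum_product]
      simp only [Finset.sum_const, nsmul_eq_mul]
      have hz : ∑ s ∈ K.divisors, (moebius s : ℤ) =
          ((↑(zeta : ArithmeticFunction ℕ) : ArithmeticFunction ℤ) * moebius) K := (coe_zeta_mul_apply).symm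
      rw [← Finset.mul_sum, hz, coe_zeta_mul_moebius, one_apply]
      split_ifs with h
      · subst h; simp
      · simp
    · -- fibers agree
      congr 1
      ext ⟨a, b⟩
      simp only [Finset.mem_filter, Finset.mem_product, Nat.mem_divisors]
      have hkK := Nat.mem_divisors.mp hk
      have hk0 : k ≠ 0 := (Nat.pos_of_mem_divisors hk).ne'
      constructor
      · rintro ⟨⟨⟨ha, _⟩, ⟨hb, _⟩⟩, hl⟩
        exact ⟨⟨⟨ha.trans hkK.1, hK.ne'⟩, ⟨hb.trans hkK.1, hK.ne'⟩⟩, hl⟩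
      · rintro ⟨⟨⟨ha, _⟩, ⟨hb, _⟩⟩, hl⟩
        refine ⟨⟨⟨?_, hk0⟩, ⟨?_, hk0⟩⟩, hl⟩
        · exact hl ▸ Nat.dvd_lcm_left a b
        · exact hl ▸ Nat.dvd_lcm_right a b
  have key' : ∀ K > 0, ∑ k ∈ K.divisors, (moebius k : ℤ) =
      (if K = 1 then (1 : ℤ) else 0) := by
    intro K hK
    rw [← coe_zeta_mul_apply, coe_zeta_mul_moebius, one_apply]
  have h1 := (sum_eq_iff_sum_smul_moebius_eq
    (f := fun k => ∑ p ∈ (k.divisors ×ˢ k.divisors).filter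
        (fun p => Nat.lcm p.1 p.2 = k), (moebius p.1 : ℤ))
    (g := fun K => if K = 1 then (1 : ℤ) else 0)).mp key k hk
  have h2 := (sum_eq_iff_sum_smul_moebius_eq
    (f := fun k => (moebius k : ℤ))
    (g := fun K => if K = 1 then (1 : ℤ) else 0)).mp key' k hk
  rw [← h1, h2]

open ArithmeticFunction in
lemma totient_eq_sum (n : ℕ) (hn : 0 < n) :
    (Nat.totient n : ℤ) = ∑ t ∈ n.divisors, (t : ℤ) * moebius (n / t) := by
  have key : ∀ m : ℕ, m > 0 → ∑ i ∈ m.divisors, (Nat.totient i : ℤ) = (m : ℤ) := by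
    intro m hm
    exact_mod_cast congrArg (Nat.cast : ℕ → ℤ) (Nat.sum_totient m)
  have h := (sum_eq_iff_sum_mul_moebius_eq
    (f := fun i => (Nat.totient i : ℤ)) (g := fun m => (m : ℤ))).mp key n hn
  simp only [Int.cast_id] at h
  rw [Nat.sum_divisorsAntidiagonal' (f := fun i j => (moebius i : ℤ) * (j : ℤ))] at h
  rw [← h]
  exact Finset.sum_congr rfl fun x _ => mul_comm _ _

theorem sum_ramanujan_lcm_convolute_eq_totient (n : ℕ) (hn : 0 < n) :
    ∑ p ∈ (n.divisors ×ˢ n.divisors).filter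
        (fun p => Nat.lcm p.1 p.2 = n), ramanujanSum p.1 p.2
      = (Nat.totient n : ℤ) := by
  classical
  rw [totient_eq_sum n hn]
  simp only [ramanujanSum]
  rw [← Finset.sum_sigma ((n.divisors ×ˢ n.divisors).filter
      (fun p => Nat.lcm p.1 p.2 = n)) (fun p => (Nat.gcd p.2 p.1).divisors)
      (fun x => (x.2 : ℤ) * ArithmeticFunction.moebius (x.1.1 / x.2))]
  have rhs : ∀ t ∈ n.divisors, (t : ℤ) * ArithmeticFunction.moebius (n / t) =
      ∑ q ∈ ((n / t).divisors ×ˢ (n / t).divisors).filter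
        (fun q => Nat.lcm q.1 q.2 = n / t), (t : ℤ) * ArithmeticFunction.moebius q.1 := by
    intro t ht
    have htpos : 0 < n / t :=
      Nat.div_pos (Nat.le_of_dvd hn (Nat.mem_divisors.mp ht).1)
        (Nat.pos_of_mem_divisors ht)
    rw [← Finset.mul_sum, sum_moebius_lcm (n / t) htpos]
  rw [Finset.sum_congr rfl rhs,
    ← Finset.sum_sigma n.divisors (fun t => ((n / t).divisors ×ˢ (n / t).divisors).filter
        (fun q => Nat.lcm q.1 q.2 = n / t))
      (fun y => (y.1 : ℤ) * ArithmeticFunction.moebius y.2.1)]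
  refine Finset.sum_nbij' (fun x => ⟨x.2, (x.1.1 / x.2, x.1.2 / x.2)⟩)
    (fun y => ⟨(y.1 * y.2.1, y.1 * y.2.2), y.1⟩) ?_ ?_ ?_ ?_ ?_
  · rintro ⟨⟨d, e⟩, t⟩ hx
    rw [Finset.mem_sigma, Finset.mem_filter, Finset.mem_product] at hx
    obtain ⟨⟨⟨hd, he⟩, hl⟩, ht⟩ := hx
    have htg := Nat.mem_divisors.mp ht
    have htd : t ∣ d := htg.1.trans (Nat.gcd_dvd_right e d)
    have hte : t ∣ e := htg.1.trans (Nat.gcd_dvd_left e d)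
    have ht0 : 0 < t := Nat.pos_of_mem_divisors ht
    have htn : t ∣ n := htd.trans (Nat.mem_divisors.mp hd).1
    have hlcm : t * Nat.lcm (d / t) (e / t) = n := by
      rw [← Nat.lcm_mul_left, Nat.mul_div_cancel' htd, Nat.mul_div_cancel' hte, hl]
    have hnt : n / t = Nat.lcm (d / t) (e / t) := by
      rw [← hlcm, Nat.mul_div_cancel_left _ ht0]
    have hnt0 : n / t ≠ 0 := (Nat.div_pos (Nat.le_of_dvd hn htn) ht0).ne'
    rw [Finset.mem_sigma, Finset.mem_filter, Finset.mem_product]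
    refine ⟨Nat.mem_divisors.mpr ⟨htn, hn.ne'⟩, ⟨?_, ?_⟩, hnt.symm⟩
    · exact Nat.mem_divisors.mpr ⟨hnt ▸ Nat.dvd_lcm_left _ _, hnt0⟩
    · exact Nat.mem_divisors.mpr ⟨hnt ▸ Nat.dvd_lcm_right _ _, hnt0⟩
  · rintro ⟨t, s, m⟩ hy
    rw [Finset.mem_sigma, Finset.mem_filter, Finset.mem_product] at hy
    obtain ⟨ht, ⟨hs, hm⟩, hl⟩ := hy
    have htn := Nat.mem_divisors.mp ht
    have ht0 : 0 < t := Nat.pos_of_mem_divisors ht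
    have hmul : t * (n / t) = n := Nat.mul_div_cancel' htn.1
    rw [Finset.mem_sigma, Finset.mem_filter, Finset.mem_product]
    have hlcm : Nat.lcm (t * s) (t * m) = n := by
      rw [Nat.lcm_mul_left, hl, hmul]
    refine ⟨⟨⟨?_, ?_⟩, hlcm⟩, ?_⟩
    · exact Nat.mem_divisors.mpr ⟨(Nat.mul_dvd_mul_left t (Nat.mem_divisors.mp hs).1).trans
        hmul.dvd, hn.ne'⟩
    · exact Nat.mem_divisors.mpr ⟨(Nat.mul_dvd_mul_left t (Nat.mem_divisors.mp hm).1).trans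
        hmul.dvd, hn.ne'⟩
    · refine Nat.mem_divisors.mpr ⟨?_, ?_⟩
      · exact Nat.dvd_gcd (Nat.dvd_mul_right t m) (Nat.dvd_mul_right t s)
      · have hts : 0 < t * s := Nat.mul_pos ht0 (Nat.pos_of_mem_divisors hs)
        exact fun h => absurd (Nat.gcd_eq_zero_iff.mp h).2 hts.ne'
  · rintro ⟨⟨d, e⟩, t⟩ hx
    rw [Finset.mem_sigma, Finset.mem_filter, Finset.mem_product] at hx
    obtain ⟨⟨⟨hd, he⟩, hl⟩, ht⟩ := hx
    have htg := Nat.mem_divisors.mp ht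
    have htd : t ∣ d := htg.1.trans (Nat.gcd_dvd_right e d)
    have hte : t ∣ e := htg.1.trans (Nat.gcd_dvd_left e d)
    simp only [Sigma.mk.inj_iff, heq_eq_eq, Prod.mk.injEq]
    exact ⟨⟨Nat.mul_div_cancel' htd, Nat.mul_div_cancel' hte⟩, trivial⟩
  · rintro ⟨t, s, m⟩ hy
    rw [Finset.mem_sigma] at hy
    have ht0 : 0 < t := Nat.pos_of_mem_divisors hy.1
    simp only [Sigma.mk.inj_iff, heq_eq_eq, Prod.mk.injEq]
    exact ⟨trivial, Nat.mul_div_cancel_left _ ht0, Nat.mul_div_cancel_left _ ht0⟩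
  · rintro ⟨⟨d, e⟩, t⟩ _
    rfl
end

section
/- For every positive integer n: ∑_{lcm(d₁,...,dᵣ)=n} φ(d₁)···φ(dᵣ) = φ_r(n), where φ_r is the Jordan totient of order r, i.e., φ_r(n) = n^r·∏_{p∣n}(1 − 1/p^r), and the sum is over ordered r-tuples with lcm equal to n. -/
open Finset ArithmeticFunction
open scoped ArithmeticFunction.Moebius

private lemma aux_pp (r : ℕ) {p k : ℕ} (hp : p.Prime) (hk : 1 ≤ k) :
    ∑ i ∈ range (k + 1), ((μ (p ^ i) : ℚ) * ((p : ℚ) ^ (k - i)) ^ r)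
      = ((p : ℚ) ^ k) ^ r * (1 - 1 / (p : ℚ) ^ r) := by
  have hp0 : (p : ℚ) ≠ 0 := Nat.cast_ne_zero.mpr hp.pos.ne'
  have h1 : ∀ i ∈ range (k + 1), (μ (p ^ i) : ℚ) * ((p : ℚ) ^ (k - i)) ^ r
      = (if i = 0 then ((p : ℚ) ^ k) ^ r else 0)
        + (if i = 1 then -(((p : ℚ) ^ (k - 1)) ^ r) else 0) := by
    intro i _
    match i with
    | 0 => simp
    | 1 => simp [moebius_apply_prime hp]
    | (m + 2) =>
      rw [moebius_apply_prime_pow hp (by omega)]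
      simp
  rw [Finset.sum_congr rfl h1, Finset.sum_add_distrib,
    Finset.sum_ite_eq' (range (k + 1)) 0, Finset.sum_ite_eq' (range (k + 1)) 1]
  obtain ⟨m, rfl⟩ : ∃ m, k = m + 1 := ⟨k - 1, by omega⟩
  have h0 : (0 : ℕ) ∈ range (m + 1 + 1) := by simp
  have h1' : (1 : ℕ) ∈ range (m + 1 + 1) := by simp
  rw [if_pos h0, if_pos h1']
  simp only [Nat.add_sub_cancel]
  have hpr : (p : ℚ) ^ r ≠ 0 := pow_ne_zero _ hp0
  rw [pow_succ, mul_pow]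
  field_simp
  ring

private lemma aux_jordan (r n : ℕ) (hn : 0 < n) :
    ∑ x ∈ n.divisorsAntidiagonal, ((μ x.1 : ℚ) * (x.2 : ℚ) ^ r)
      = (n : ℚ) ^ r * ∏ p ∈ n.primeFactors, (1 - 1 / (p : ℚ) ^ r) := by
  set F : ArithmeticFunction ℚ :=
    ((μ : ArithmeticFunction ℤ) : ArithmeticFunction ℚ)
      * ((pow r : ArithmeticFunction ℕ) : ArithmeticFunction ℚ) with hFdef
  have hF : F.IsMultiplicative :=
    isMultiplicative_moebius.intCast.mul isMultiplicative_pow.natCast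
  -- value at prime powers
  have hFpp : ∀ p k : ℕ, p.Prime → 1 ≤ k →
      F (p ^ k) = ((p : ℚ) ^ k) ^ r * (1 - 1 / (p : ℚ) ^ r) := by
    intro p k hp hk
    rw [hFdef, mul_apply,
      Nat.sum_divisorsAntidiagonal
        (f := fun a b => (((μ : ArithmeticFunction ℤ) : ArithmeticFunction ℚ) a
          * ((pow r : ArithmeticFunction ℕ) : ArithmeticFunction ℚ) b)),
      Nat.sum_divisors_prime_pow hp]
    rw [← aux_pp r hp hk]
    refine Finset.sum_congr rfl fun i hi => ?_
    have hik : i ≤ k := by simpa using Nat.lt_succ_iff.mp (mem_range.mp hi)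
    have hdiv : p ^ k / p ^ i = p ^ (k - i) := Nat.pow_div hik hp.pos
    rw [hdiv, intCoe_apply, natCoe_apply, pow_apply,
      if_neg (fun h => absurd h.2 (pow_ne_zero _ hp.pos.ne'))]
    push_cast
    ring
  -- the sum is F n
  have hFn : F n = ∑ x ∈ n.divisorsAntidiagonal, ((μ x.1 : ℚ) * (x.2 : ℚ) ^ r) := by
    rw [hFdef, mul_apply]
    refine Finset.sum_congr rfl fun x hx => ?_
    have hx2 : x.2 ≠ 0 := (Nat.pos_of_mem_divisors (Nat.snd_mem_divisors_of_mem_antidiagonal hx)).ne'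
    rw [intCoe_apply, natCoe_apply, pow_apply, if_neg (fun h => hx2 h.2)]
    push_cast
    ring
  rw [← hFn, hF.multiplicative_factorization F hn.ne']
  -- rewrite RHS as product over prime factors
  have hcast : (n : ℚ) ^ r = ∏ p ∈ n.primeFactors, ((p : ℚ) ^ n.factorization p) ^ r := by
    conv_lhs => rw [← Nat.factorization_prod_pow_eq_self hn.ne']
    rw [Finsupp.prod, Nat.support_factorization]
    push_cast
    rw [Finset.prod_pow]
  rw [hcast, ← Finset.prod_mul_distrib, Finsupp.prod, Nat.support_factorization]
  refine Finset.prod_congr rfl fun p hp => ?_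
  have hpp : p.Prime := Nat.prime_of_mem_primeFactors hp
  have hk : 1 ≤ n.factorization p :=
    (Nat.Prime.factorization_pos_of_dvd hpp hn.ne' (Nat.dvd_of_mem_primeFactors hp))
  exact hFpp p _ hpp hk

private lemma aux_sum_divisors (r m : ℕ) (hm : 0 < m) :
    ∑ d ∈ m.divisors,
        (∑ t ∈ (Fintype.piFinset fun _ : Fin r => d.divisors).filter
          (fun t => Finset.univ.lcm t = d), ∏ i, Nat.totient (t i)) = m ^ r := by
  have h1 : ∀ d ∈ m.divisors,
      (Fintype.piFinset fun _ : Fin r => d.divisors).filter (fun t => Finset.univ.lcm t = d)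
        = (Fintype.piFinset fun _ : Fin r => m.divisors).filter
            (fun t => Finset.univ.lcm t = d) := by
    intro d hd
    obtain ⟨hdm, hm0⟩ := Nat.mem_divisors.mp hd
    have hd0 : d ≠ 0 := fun h => hm0 (zero_dvd_iff.mp (h ▸ hdm))
    ext t
    simp only [mem_filter, Fintype.mem_piFinset, Nat.mem_divisors]
    constructor
    · rintro ⟨h, hl⟩
      exact ⟨fun i => ⟨(h i).1.trans hdm, hm0⟩, hl⟩
    · rintro ⟨h, hl⟩
      exact ⟨fun i => ⟨hl ▸ Finset.dvd_lcm (mem_univ i), hd0⟩, hl⟩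
  calc ∑ d ∈ m.divisors,
        (∑ t ∈ (Fintype.piFinset fun _ : Fin r => d.divisors).filter
          (fun t => Finset.univ.lcm t = d), ∏ i, Nat.totient (t i))
      = ∑ d ∈ m.divisors,
        (∑ t ∈ (Fintype.piFinset fun _ : Fin r => m.divisors).filter
          (fun t => Finset.univ.lcm t = d), ∏ i, Nat.totient (t i)) :=
        Finset.sum_congr rfl fun d hd => by rw [h1 d hd]
    _ = ∑ t ∈ Fintype.piFinset fun _ : Fin r => m.divisors, ∏ i, Nat.totient (t i) := by
        refine Finset.sum_fiberwise_of_maps_to (fun t ht => ?_) _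
        refine Nat.mem_divisors.mpr ⟨Finset.lcm_dvd fun i _ => ?_, hm.ne'⟩
        exact (Nat.mem_divisors.mp ((Fintype.mem_piFinset.mp ht) i)).1
    _ = ∏ _i : Fin r, ∑ x ∈ m.divisors, Nat.totient x := (Finset.prod_univ_sum _ _).symm
    _ = m ^ r := by simp [Nat.sum_totient]

theorem sum_totient_prod_over_lcm_tuples_eq_jordan_totient (r n : ℕ)
    (hn : 0 < n) :
    ((∑ d ∈ (Fintype.piFinset fun _ : Fin r => n.divisors).filter
        (fun d => Finset.univ.lcm d = n), ∏ i, Nat.totient (d i) : ℕ) : ℚ)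
      = (n : ℚ) ^ r * ∏ p ∈ n.primeFactors, (1 - 1 / (p : ℚ) ^ r) := by
  set S : ℕ → ℚ := fun m =>
    ((∑ d ∈ (Fintype.piFinset fun _ : Fin r => m.divisors).filter
        (fun d => Finset.univ.lcm d = m), ∏ i, Nat.totient (d i) : ℕ) : ℚ) with hS
  have claimA : ∀ m > 0, ∑ d ∈ m.divisors, S d = ((fun m : ℕ => (m : ℚ) ^ r) m) := by
    intro m hm
    simp only [hS]
    rw [← Nat.cast_sum, aux_sum_divisors r m hm, Nat.cast_pow]
  have hmob := (sum_eq_iff_sum_smul_moebius_eq (R := ℚ)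
    (f := S) (g := fun m : ℕ => (m : ℚ) ^ r)).mp claimA n hn
  show S n = _
  rw [← hmob, ← aux_jordan r n hn]
  refine Finset.sum_congr rfl fun x _ => ?_
  rw [zsmul_eq_mul]
end
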